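/- arXiv:1102.4803 — 2 statements merged into one kernel-verified Lean document; each statement's English description precedes it below -/
import Mathlib

section
/- (FKG/Harris inequality) Consider the product Bernoulli(p) measure P_p on configurations ω : ℤ × ℤ → Bool. If A and B are measurable events that are both increasing, or both decreasing, then P_p(A ∩ B) ≥ P_p(A)·P_p(B). -/
open MeasureTheory

/-- Configurations of site percolation on `ℤ²`: `true` = open (black). -/
abbrev Config : Type := ℤ × ℤ → Bool

/-- Two sites of `ℤ²` are adjacent iff `|v₁ − w₁| + |v₂ − w₂| = 1`. -/
def Adjacent (v w : ℤ × ℤ) : Prop := |v.1 - w.1| + |v.2 - w.2| = 1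

/-- `OpenConn ω S v w` : there is a path of adjacent open sites staying in `S`
joining `v` to `w` (in the configuration `ω`). -/
def OpenConn (ω : Config) (S : Set (ℤ × ℤ)) : ℤ × ℤ → ℤ × ℤ → Prop :=
  Relation.ReflTransGen fun a b => Adjacent a b ∧ b ∈ S ∧ ω b = true

/-- The open cluster of the site `v` within the region `S`, in the configuration `ω`:
the set of open sites of `S` joined to `v` by a path of adjacent open sites staying in
`S`. It is empty if `v` is closed or `v ∉ S`. -/
def cluster (ω : Config) (S : Set (ℤ × ℤ)) (v : ℤ × ℤ) : Set (ℤ × ℤ) :=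
  {w | v ∈ S ∧ ω v = true ∧ OpenConn ω S v w}

/-- `IsBernoulliProduct p μ` : `μ` is the product measure on configurations under which
each site of `ℤ²` is independently open with probability `p`. -/
def IsBernoulliProduct (p : ℝ) (μ : Measure Config) : Prop :=
  IsProbabilityMeasure μ ∧
    ∀ (s : Finset (ℤ × ℤ)) (f : (ℤ × ℤ) → Bool),
      μ {ω | ∀ v ∈ s, ω v = f v} =
        ∏ v ∈ s, ENNReal.ofReal (if f v then p else 1 - p)

/-- The critical probability `p_c` of site percolation on `ℤ²`:
`p_c = sSup {p ∈ [0,1] : P_p(|C(0,0)| = ∞) = 0}`. -/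
noncomputable def siteCriticalProbability : ℝ :=
  sSup {p : ℝ | p ∈ Set.Icc (0 : ℝ) 1 ∧
    ∀ μ : Measure Config, IsBernoulliProduct p μ →
      μ {ω | (cluster ω Set.univ (0, 0)).Infinite} = 0}

/-- The `N × N` box `{1,…,N} × {1,…,N}` in `ℤ²` (the pixel screen). -/
def box (N : ℕ) : Set (ℤ × ℤ) :=
  {v | 1 ≤ v.1 ∧ v.1 ≤ (N : ℤ) ∧ 1 ≤ v.2 ∧ v.2 ≤ (N : ℤ)}

/-- The box `{0,…,n} × {0,…,n}` in `ℤ²`. -/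
def box0 (n : ℕ) : Set (ℤ × ℤ) :=
  {v | 0 ≤ v.1 ∧ v.1 ≤ (n : ℤ) ∧ 0 ≤ v.2 ∧ v.2 ≤ (n : ℤ)}

/-- An event of configurations is increasing if it is stable under opening more sites
(`false ≤ true`, pointwise order). -/
def IncreasingEvent (A : Set Config) : Prop :=
  ∀ ω ω' : Config, ω ≤ ω' → ω ∈ A → ω' ∈ A

/-- An event of configurations is decreasing if it is stable under closing sites. -/
def DecreasingEvent (A : Set Config) : Prop :=
  ∀ ω ω' : Config, ω' ≤ ω → ω ∈ A → ω' ∈ A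

namespace FKGaux

/-- The cylinder event prescribing the configuration on `s` to agree with `f`. -/
def cylF (s : Finset (ℤ × ℤ)) (f : (ℤ × ℤ) → Bool) : Set Config :=
  {ω | ∀ v ∈ s, ω v = f v}

/-- The configuration associated to a finite set (true exactly on `t`). -/
def cfg (t : Finset (ℤ × ℤ)) : Config := fun v => decide (v ∈ t)

/-- The cylinder event prescribing the configuration on `s` to be `true` exactly on `t`. -/
def cylT (s t : Finset (ℤ × ℤ)) : Set Config := cylF s (cfg t)

lemma measurableSet_cylF (s : Finset (ℤ × ℤ)) (f : (ℤ × ℤ) → Bool) :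
    MeasurableSet (cylF s f) := by
  have : cylF s f = ⋂ v ∈ (s : Set (ℤ × ℤ)), {ω : Config | ω v = f v} := by
    ext ω; simp [cylF]
  rw [this]
  refine MeasurableSet.biInter s.countable_toSet fun v _ => ?_
  have : {ω : Config | ω v = f v} = (fun ω : Config => ω v) ⁻¹' {f v} := rfl
  rw [this]
  exact (measurable_pi_apply v) (measurableSet_singleton (f v))

lemma measurableSet_cylT (s t : Finset (ℤ × ℤ)) : MeasurableSet (cylT s t) :=
  measurableSet_cylF s (cfg t)

lemma mem_cylT_iff {s t : Finset (ℤ × ℤ)} (ht : t ⊆ s) (ω : Config) :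
    ω ∈ cylT s t ↔ s.filter (fun v => ω v = true) = t := by
  constructor
  · intro h
    ext v
    simp only [Finset.mem_filter]
    constructor
    · rintro ⟨hvs, hvt⟩
      have h2 := h v hvs
      rw [hvt] at h2
      exact of_decide_eq_true h2.symm
    · intro hvt
      refine ⟨ht hvt, ?_⟩
      have h2 := h v (ht hvt)
      rw [h2]; simp [cfg, hvt]
  · rintro rfl v hvs
    show ω v = cfg (s.filter fun v => ω v = true) v
    cases hb : ω v <;> simp [cfg, Finset.mem_filter, hvs, hb]

variable {p : ℝ} {μ : Measure Config}

lemma meas_cylF (hμ : IsBernoulliProduct p μ) (s : Finset (ℤ × ℤ)) (f : (ℤ × ℤ) → Bool) :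
    μ (cylF s f) = ∏ v ∈ s, ENNReal.ofReal (if f v then p else 1 - p) :=
  hμ.2 s f

noncomputable def W (p : ℝ) (s t : Finset (ℤ × ℤ)) : ℝ :=
  ∏ v ∈ s, (if v ∈ t then p else 1 - p)

lemma meas_cylT (hμ : IsBernoulliProduct p μ) (hp0 : 0 ≤ p) (hp1 : p ≤ 1)
    (s t : Finset (ℤ × ℤ)) : μ (cylT s t) = ENNReal.ofReal (W p s t) := by
  rw [cylT, meas_cylF hμ]
  have h1 : ∀ v ∈ s, ENNReal.ofReal (if cfg t v then p else 1 - p) =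
      ENNReal.ofReal (if v ∈ t then p else 1 - p) := by
    intro v _; simp [cfg]
  rw [Finset.prod_congr rfl h1,
    ← ENNReal.ofReal_prod_of_nonneg (fun v _ => by split <;> linarith)]
  rfl

lemma sum_partition (s : Finset (ℤ × ℤ)) {E : Set Config} (hE : MeasurableSet E) :
    ∑ t ∈ s.powerset, μ (E ∩ cylT s t) = μ E := by
  have hdisj : (↑s.powerset : Set (Finset (ℤ × ℤ))).PairwiseDisjoint
      fun t => E ∩ cylT s t := by
    intro t ht t' ht' hne
    simp only [Finset.coe_powerset, Set.mem_preimage, Set.mem_powerset_iff,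
      Finset.coe_subset] at ht ht'
    rw [Function.onFun, Set.disjoint_left]
    rintro ω ⟨-, hω⟩ ⟨-, hω'⟩
    rw [mem_cylT_iff ht ω] at hω
    rw [mem_cylT_iff ht' ω] at hω'
    exact hne (hω ▸ hω')
  have hmeas : ∀ t ∈ s.powerset, MeasurableSet (E ∩ cylT s t) := fun t _ =>
    hE.inter (measurableSet_cylT s t)
  rw [← measure_biUnion_finset hdisj hmeas]
  congr 1
  apply Set.eq_of_subset_of_subset
  · exact Set.iUnion₂_subset fun t _ => Set.inter_subset_left
  · intro ω hω
    have hmem : (s.filter fun v => ω v = true) ∈ s.powerset :=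
      Finset.mem_powerset.2 (Finset.filter_subset _ _)
    exact Set.mem_biUnion hmem ⟨hω, (mem_cylT_iff (Finset.filter_subset _ _) ω).2 rfl⟩

lemma meas_eval (hμ : IsBernoulliProduct p μ) (a : ℤ × ℤ) (b : Bool) :
    μ {ω : Config | ω a = b} = ENNReal.ofReal (if b then p else 1 - p) := by
  have h1 : {ω : Config | ω a = b} = {ω : Config | ∀ v ∈ ({a} : Finset (ℤ × ℤ)), ω v = b} := by
    ext ω; simp
  rw [h1, hμ.2 {a} (fun _ => b), Finset.prod_singleton]

end FKGaux

namespace FKGaux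

/-- The collection of all cylinder events. -/
def Cyl : Set (Set Config) :=
  {C | ∃ (s : Finset (ℤ × ℤ)) (f : (ℤ × ℤ) → Bool), C = cylF s f}

lemma isPiSystem_Cyl : IsPiSystem Cyl := by
  rintro C ⟨s, f, rfl⟩ C' ⟨s', f', rfl⟩ hne
  obtain ⟨ω0, h0, h0'⟩ := hne
  refine ⟨s ∪ s', fun v => if v ∈ s then f v else f' v, ?_⟩
  ext ω
  simp only [Set.mem_inter_iff, cylF, Set.mem_setOf_eq, Finset.mem_union]
  constructor
  · rintro ⟨h1, h2⟩ v hv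
    by_cases hvs : v ∈ s
    · rw [if_pos hvs]; exact h1 v hvs
    · rw [if_neg hvs]; exact h2 v (hv.resolve_left hvs)
  · intro h
    constructor
    · intro v hv; have := h v (Or.inl hv); rwa [if_pos hv] at this
    · intro v hv
      by_cases hvs : v ∈ s
      · have := h v (Or.inl hvs); rw [if_pos hvs] at this
        rw [this, ← h0 v hvs]; exact h0' v hv
      · have := h v (Or.inr hv); rwa [if_neg hvs] at this

lemma generateFrom_Cyl :
    (inferInstance : MeasurableSpace Config) = MeasurableSpace.generateFrom Cyl := by
  apply le_antisymm
  · rw [show (inferInstance : MeasurableSpace Config) = MeasurableSpace.pi from rfl,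
      MeasurableSpace.pi]
    refine iSup_le fun v => ?_
    rw [MeasurableSpace.comap_le_iff_le_map]
    intro S _
    show MeasurableSet[MeasurableSpace.generateFrom Cyl] ((fun ω : Config => ω v) ⁻¹' S)
    have hb : ∀ b : Bool, MeasurableSet[MeasurableSpace.generateFrom Cyl]
        {ω : Config | ω v = b} := fun b =>
      MeasurableSpace.measurableSet_generateFrom
        ⟨{v}, fun _ => b, by ext ω; simp only [cylF, Finset.mem_singleton, Set.mem_setOf_eq, forall_eq]⟩
    have : (fun ω : Config => ω v) ⁻¹' S = ⋃ b ∈ S, {ω : Config | ω v = b} := by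
      ext ω; simp [Set.mem_preimage]
    rw [this]
    exact MeasurableSet.biUnion S.to_countable fun b _ => hb b
  · exact MeasurableSpace.generateFrom_le (by rintro C ⟨s, f, rfl⟩; exact measurableSet_cylF s f)

variable {p : ℝ} {μ : Measure Config}

lemma measurable_T (a : ℤ × ℤ) :
    Measurable (fun ω : Config => Function.update ω a true) := by
  apply measurable_pi_lambda
  intro v
  by_cases h : v = a
  · subst h
    simp only [Function.update_self]
    exact measurable_const
  · simp only [Function.update_of_ne h]
    exact measurable_pi_apply v

/-- The key single-site flip identity for the Bernoulli product measure. -/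
lemma flip_step (hp0 : 0 ≤ p) (hp1 : p ≤ 1) (hμ : IsBernoulliProduct p μ) (a : ℤ × ℤ)
    {E : Set Config} (hE : MeasurableSet E) (hEa : E ⊆ {ω : Config | ω a = true}) :
    ENNReal.ofReal (1 - p) * μ E =
      ENNReal.ofReal p *
        μ ((fun ω : Config => Function.update ω a true) ⁻¹' E ∩ {ω : Config | ω a = false}) := by
  haveI := hμ.1
  set T := fun ω : Config => Function.update ω a true with hT
  have hC1 : MeasurableSet {ω : Config | ω a = true} := by
    have : {ω : Config | ω a = true} = (fun ω : Config => ω a) ⁻¹' {true} := rfl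
    rw [this]; exact (measurable_pi_apply a) (measurableSet_singleton true)
  have hC0 : MeasurableSet {ω : Config | ω a = false} := by
    have : {ω : Config | ω a = false} = (fun ω : Config => ω a) ⁻¹' {false} := rfl
    rw [this]; exact (measurable_pi_apply a) (measurableSet_singleton false)
  set ν1 : Measure Config := ENNReal.ofReal (1 - p) • μ.restrict {ω : Config | ω a = true}
    with hν1def
  set ν2 : Measure Config :=
    ENNReal.ofReal p • (μ.restrict {ω : Config | ω a = false}).map T with hν2def
  have hν1eval : ∀ {S : Set Config}, MeasurableSet S →
      ν1 S = ENNReal.ofReal (1 - p) * μ (S ∩ {ω : Config | ω a = true}) := by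
    intro S hS
    rw [hν1def, Measure.smul_apply, smul_eq_mul, Measure.restrict_apply hS]
  have hν2eval : ∀ {S : Set Config}, MeasurableSet S →
      ν2 S = ENNReal.ofReal p * μ (T ⁻¹' S ∩ {ω : Config | ω a = false}) := by
    intro S hS
    rw [hν2def, Measure.smul_apply, smul_eq_mul,
      Measure.map_apply (measurable_T a) hS, Measure.restrict_apply (measurable_T a hS)]
  have hν12 : ν1 = ν2 := by
    haveI : IsFiniteMeasure ν1 := by
      constructor
      rw [hν1eval MeasurableSet.univ]
      exact ENNReal.mul_lt_top ENNReal.ofReal_lt_top (measure_lt_top μ _)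
    apply ext_of_generate_finite Cyl generateFrom_Cyl isPiSystem_Cyl
    · rintro S ⟨s, f, rfl⟩
      rw [hν1eval (measurableSet_cylF s f), hν2eval (measurableSet_cylF s f)]
      by_cases has : a ∈ s
      · by_cases hfa : f a = true
        · -- a ∈ s, f a = true
          have e1 : cylF s f ∩ {ω : Config | ω a = true} = cylF s f := by
            apply Set.inter_eq_self_of_subset_left
            intro ω hω
            show ω a = true
            exact (hω a has).trans hfa
          have e2 : T ⁻¹' cylF s f ∩ {ω : Config | ω a = false} =
              cylF s (Function.update f a false) := by
            ext ω
            simp only [Set.mem_inter_iff, Set.mem_preimage, cylF, Set.mem_setOf_eq, hT]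
            constructor
            · rintro ⟨h1, h2⟩ v hv
              by_cases hva : v = a
              · subst hva; rw [Function.update_self]; exact h2
              · rw [Function.update_of_ne hva]
                have := h1 v hv
                rwa [Function.update_of_ne hva] at this
            · intro h
              have hωa : ω a = false := by
                have := h a has; rwa [Function.update_self] at this
              refine ⟨fun v hv => ?_, hωa⟩
              by_cases hva : v = a
              · subst hva; rw [Function.update_self]; exact hfa.symm
              · rw [Function.update_of_ne hva]
                have := h v hv
                rwa [Function.update_of_ne hva] at this
          rw [e1, e2, meas_cylF hμ, meas_cylF hμ,
            ← Finset.mul_prod_erase s _ has, ← Finset.mul_prod_erase s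
              (fun v => ENNReal.ofReal (if Function.update f a false v then p else 1 - p)) has]
          have hcongr : ∏ v ∈ s.erase a,
              ENNReal.ofReal (if Function.update f a false v then p else 1 - p) =
              ∏ v ∈ s.erase a, ENNReal.ofReal (if f v then p else 1 - p) :=
            Finset.prod_congr rfl fun v hv => by
              rw [Function.update_of_ne (Finset.ne_of_mem_erase hv)]
          rw [hcongr, Function.update_self, hfa]
          simp only [if_true, Bool.false_eq_true, if_false]
          ring
        · -- a ∈ s, f a = false
          have hfa' : f a = false := by
            cases h : f a
            · rfl
            · exact absurd h hfa
          have e1 : cylF s f ∩ {ω : Config | ω a = true} = ∅ := by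
            ext ω
            simp only [Set.mem_inter_iff, cylF, Set.mem_setOf_eq, Set.mem_empty_iff_false,
              iff_false, not_and]
            intro h1 h2
            have := h1 a has
            rw [h2, hfa'] at this
            simp at this
          have e2 : T ⁻¹' cylF s f ∩ {ω : Config | ω a = false} = ∅ := by
            ext ω
            simp only [Set.mem_inter_iff, Set.mem_preimage, cylF, Set.mem_setOf_eq,
              Set.mem_empty_iff_false, iff_false, not_and, hT]
            intro h1 _
            have := h1 a has
            rw [Function.update_self, hfa'] at this
            simp at this
          rw [e1, e2]
          simp
      · -- a ∉ s
        have e1 : cylF s f ∩ {ω : Config | ω a = true} =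
            cylF (insert a s) (Function.update f a true) := by
          ext ω
          simp only [Set.mem_inter_iff, cylF, Set.mem_setOf_eq, Finset.mem_insert]
          constructor
          · rintro ⟨h1, h2⟩ v hv
            rcases hv with rfl | hv
            · rw [Function.update_self]; exact h2
            · have hva : v ≠ a := by rintro rfl; exact has hv
              rw [Function.update_of_ne hva]; exact h1 v hv
          · intro h
            constructor
            · intro v hv
              have hva : v ≠ a := by rintro rfl; exact has hv
              have := h v (Or.inr hv)
              rwa [Function.update_of_ne hva] at this
            · have := h a (Or.inl rfl)
              rwa [Function.update_self] at this
        have e2 : T ⁻¹' cylF s f ∩ {ω : Config | ω a = false} =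
            cylF (insert a s) (Function.update f a false) := by
          ext ω
          simp only [Set.mem_inter_iff, Set.mem_preimage, cylF, Set.mem_setOf_eq,
            Finset.mem_insert, hT]
          constructor
          · rintro ⟨h1, h2⟩ v hv
            rcases hv with rfl | hv
            · rw [Function.update_self]; exact h2
            · have hva : v ≠ a := by rintro rfl; exact has hv
              rw [Function.update_of_ne hva]
              have := h1 v hv
              rwa [Function.update_of_ne hva] at this
          · intro h
            constructor
            · intro v hv
              have hva : v ≠ a := by rintro rfl; exact has hv
              have h2 := h v (Or.inr hv)
              rw [Function.update_of_ne hva] at h2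
              rw [Function.update_of_ne hva]
              exact h2
            · have := h a (Or.inl rfl)
              rwa [Function.update_self] at this
        rw [e1, e2, meas_cylF hμ, meas_cylF hμ, Finset.prod_insert has, Finset.prod_insert has,
          Function.update_self, Function.update_self]
        have hcongr : ∀ b : Bool, ∏ v ∈ s,
            ENNReal.ofReal (if Function.update f a b v then p else 1 - p) =
            ∏ v ∈ s, ENNReal.ofReal (if f v then p else 1 - p) := fun b =>
          Finset.prod_congr rfl fun v hv => by
            have hva : v ≠ a := by rintro rfl; exact has hv
            rw [Function.update_of_ne hva]
        rw [hcongr, hcongr]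
        simp only [if_true, Bool.false_eq_true, if_false]
        ring
    · rw [hν1eval MeasurableSet.univ, hν2eval MeasurableSet.univ, Set.univ_inter,
        Set.preimage_univ, Set.univ_inter, meas_eval hμ a true, meas_eval hμ a false]
      simp only [if_true, Bool.false_eq_true, if_false]
      ring
  have h1 : ν1 E = ENNReal.ofReal (1 - p) * μ E := by
    rw [hν1eval hE, Set.inter_eq_self_of_subset_left hEa]
  have h2 : ν2 E = ENNReal.ofReal p * μ (T ⁻¹' E ∩ {ω : Config | ω a = false}) :=
    hν2eval hE
  rw [← h1, hν12, h2]

end FKGaux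

namespace FKGaux

variable {p : ℝ} {μ : Measure Config}

lemma W_nonneg (hp0 : 0 ≤ p) (hp1 : p ≤ 1) (s t : Finset (ℤ × ℤ)) : 0 ≤ W p s t :=
  Finset.prod_nonneg fun v _ => by split <;> linarith

lemma W_pos (hp0 : 0 < p) (hp1 : p < 1) (s t : Finset (ℤ × ℤ)) : 0 < W p s t :=
  Finset.prod_pos fun v _ => by split <;> linarith

lemma cond_step (hp0 : 0 < p) (hp1 : p < 1) (hμ : IsBernoulliProduct p μ)
    {A : Set Config} (hA : MeasurableSet A) (hinc : IncreasingEvent A)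
    {s t : Finset (ℤ × ℤ)} {a : ℤ × ℤ} (has : a ∈ s) (hat : a ∉ t) :
    p * (μ (A ∩ cylT s t)).toReal ≤ (1 - p) * (μ (A ∩ cylT s (insert a t))).toReal := by
  haveI := hμ.1
  set T := fun ω : Config => Function.update ω a true with hT
  have hE : MeasurableSet (A ∩ cylT s (insert a t)) := hA.inter (measurableSet_cylT _ _)
  have hEa : A ∩ cylT s (insert a t) ⊆ {ω : Config | ω a = true} := by
    rintro ω ⟨-, hωc⟩
    have := hωc a has
    show ω a = true
    rw [this]
    simp [cfg]
  have key := flip_step hp0.le hp1.le hμ a hE hEa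
  have hsub : A ∩ cylT s t ⊆
      T ⁻¹' (A ∩ cylT s (insert a t)) ∩ {ω : Config | ω a = false} := by
    rintro ω ⟨hωA, hωc⟩
    have hωa : ω a = false := by
      have := hωc a has
      rw [this]
      simp [cfg, hat]
    refine ⟨⟨?_, ?_⟩, hωa⟩
    · refine hinc ω (T ω) (fun v => ?_) hωA
      by_cases hva : v = a
      · subst hva; rw [hT]; simp only [Function.update_self]; exact Bool.le_true _
      · rw [hT]; simp only [Function.update_of_ne hva]; exact le_refl _
    · intro v hv
      by_cases hva : v = a
      · subst hva
        rw [hT]; simp only [Function.update_self]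
        simp [cfg]
      · rw [hT]; simp only [Function.update_of_ne hva]
        rw [hωc v hv]
        simp [cfg, Finset.mem_insert, hva]
  have hmono : ENNReal.ofReal p * μ (A ∩ cylT s t) ≤
      ENNReal.ofReal (1 - p) * μ (A ∩ cylT s (insert a t)) := by
    rw [key]
    exact mul_le_mul_right (measure_mono hsub) _
  have hfin1 : ENNReal.ofReal (1 - p) * μ (A ∩ cylT s (insert a t)) ≠ ⊤ :=
    ENNReal.mul_ne_top ENNReal.ofReal_ne_top (measure_ne_top μ _)
  have := ENNReal.toReal_mono hfin1 hmono
  rwa [ENNReal.toReal_mul, ENNReal.toReal_mul, ENNReal.toReal_ofReal hp0.le,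
    ENNReal.toReal_ofReal (by linarith : (0:ℝ) ≤ 1 - p)] at this

lemma cond_mono_step (hp0 : 0 < p) (hp1 : p < 1) (hμ : IsBernoulliProduct p μ)
    {A : Set Config} (hA : MeasurableSet A) (hinc : IncreasingEvent A)
    {s t : Finset (ℤ × ℤ)} {a : ℤ × ℤ} (has : a ∈ s) (hat : a ∉ t) :
    (μ (A ∩ cylT s t)).toReal / W p s t ≤
      (μ (A ∩ cylT s (insert a t))).toReal / W p s (insert a t) := by
  have hW1 : 0 < W p s t := W_pos hp0 hp1 s t
  have hW2 : 0 < W p s (insert a t) := W_pos hp0 hp1 s _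
  rw [div_le_div_iff₀ hW1 hW2]
  have e1 : W p s t = (1 - p) * ∏ v ∈ s.erase a, (if v ∈ t then p else 1 - p) := by
    rw [W, ← Finset.mul_prod_erase s _ has, if_neg hat]
  have e2 : W p s (insert a t) = p * ∏ v ∈ s.erase a, (if v ∈ t then p else 1 - p) := by
    rw [W, ← Finset.mul_prod_erase s _ has, if_pos (Finset.mem_insert_self _ _)]
    congr 1
    refine Finset.prod_congr rfl fun v hv => ?_
    have hva : v ≠ a := Finset.ne_of_mem_erase hv
    simp [Finset.mem_insert, hva]
  have hQ0 : (0:ℝ) ≤ ∏ v ∈ s.erase a, (if v ∈ t then p else 1 - p) :=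
    Finset.prod_nonneg fun v _ => by split <;> linarith
  have hstep := cond_step hp0 hp1 hμ hA hinc has hat
  have := mul_le_mul_of_nonneg_right hstep hQ0
  rw [e1, e2]
  nlinarith [this]

lemma cond_mono (hp0 : 0 < p) (hp1 : p < 1) (hμ : IsBernoulliProduct p μ)
    {A : Set Config} (hA : MeasurableSet A) (hinc : IncreasingEvent A)
    {s : Finset (ℤ × ℤ)} :
    ∀ t t' : Finset (ℤ × ℤ), t ⊆ t' → t' ⊆ s →
      (μ (A ∩ cylT s t)).toReal / W p s t ≤ (μ (A ∩ cylT s t')).toReal / W p s t' := by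
  have main : ∀ u : Finset (ℤ × ℤ), u ⊆ s → ∀ t : Finset (ℤ × ℤ), Disjoint t u →
      (μ (A ∩ cylT s t)).toReal / W p s t ≤
        (μ (A ∩ cylT s (t ∪ u))).toReal / W p s (t ∪ u) := by
    intro u
    induction u using Finset.induction_on with
    | empty => intro _ t _; rw [Finset.union_empty]
    | insert _ _ hb =>
      rename_i b u ih
      intro hus t hdisj
      have hbs : b ∈ s := hus (Finset.mem_insert_self _ _)
      have hus' : u ⊆ s := (Finset.subset_insert _ _).trans hus
      have hbt : b ∉ t := by
        have := Finset.disjoint_insert_right.1 hdisj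
        exact fun hh => this.1 hh
      have hdisj' : Disjoint t u := (Finset.disjoint_insert_right.1 hdisj).2
      have h1 := ih hus' t hdisj'
      have hbtu : b ∉ t ∪ u := by
        simp only [Finset.mem_union, not_or]
        exact ⟨hbt, hb⟩
      have h2 := cond_mono_step hp0 hp1 hμ hA hinc hbs hbtu
      rw [Finset.union_insert]
      exact h1.trans h2
  intro t t' hts ht's
  have h := main (t' \ t) (Finset.sdiff_subset.trans ht's) t Finset.disjoint_sdiff
  rwa [Finset.union_sdiff_of_subset hts] at h

end FKGaux

namespace FKGaux

variable {p : ℝ} {μ : Measure Config}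

/-- The algebra of finite unions of cylinders on a common base. -/
def CylU : Set (Set Config) :=
  {C | ∃ (s : Finset (ℤ × ℤ)) (U : Finset (Finset (ℤ × ℤ))),
    U ⊆ s.powerset ∧ C = ⋃ t ∈ U, cylT s t}

lemma mem_biUnion_cylT {s : Finset (ℤ × ℤ)} {U : Finset (Finset (ℤ × ℤ))}
    (hU : U ⊆ s.powerset) (ω : Config) :
    ω ∈ (⋃ t ∈ U, cylT s t) ↔ s.filter (fun v => ω v = true) ∈ U := by
  simp only [Set.mem_iUnion, exists_prop]
  constructor
  · rintro ⟨t, ht, hω⟩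
    rw [mem_cylT_iff (Finset.mem_powerset.1 (hU ht)) ω] at hω
    rwa [hω]
  · intro h
    exact ⟨_, h, (mem_cylT_iff (Finset.filter_subset _ _) ω).2 rfl⟩

lemma filter_inter_eq {s s' : Finset (ℤ × ℤ)} (hss : s ⊆ s') (ω : Config) :
    s'.filter (fun v => ω v = true) ∩ s = s.filter (fun v => ω v = true) := by
  ext v
  simp only [Finset.mem_inter, Finset.mem_filter]
  constructor
  · rintro ⟨⟨_, h2⟩, h3⟩; exact ⟨h3, h2⟩
  · rintro ⟨h1, h2⟩; exact ⟨⟨hss h1, h2⟩, h1⟩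

lemma biUnion_lift {s s' : Finset (ℤ × ℤ)} (hss : s ⊆ s') {U : Finset (Finset (ℤ × ℤ))}
    (hU : U ⊆ s.powerset) :
    (⋃ t ∈ U, cylT s t) =
      ⋃ t ∈ (s'.powerset.filter fun t' => t' ∩ s ∈ U), cylT s' t := by
  ext ω
  rw [mem_biUnion_cylT hU, mem_biUnion_cylT (Finset.filter_subset _ _)]
  simp only [Finset.mem_filter, Finset.mem_powerset]
  rw [filter_inter_eq hss ω]
  exact ⟨fun h => ⟨Finset.filter_subset _ _, h⟩, fun h => h.2⟩

lemma isSetAlgebra_CylU : MeasureTheory.IsSetAlgebra CylU where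
  empty_mem := ⟨∅, ∅, by simp, by simp⟩
  compl_mem := by
    rintro C ⟨s, U, hU, rfl⟩
    refine ⟨s, s.powerset \ U, Finset.sdiff_subset, ?_⟩
    ext ω
    rw [Set.mem_compl_iff, mem_biUnion_cylT hU, mem_biUnion_cylT Finset.sdiff_subset]
    simp [Finset.mem_sdiff, Finset.mem_powerset, Finset.filter_subset]
  union_mem := by
    rintro C D ⟨s, U, hU, rfl⟩ ⟨s', U', hU', rfl⟩
    refine ⟨s ∪ s',
      ((s ∪ s').powerset.filter fun t => t ∩ s ∈ U) ∪
        ((s ∪ s').powerset.filter fun t => t ∩ s' ∈ U'),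
      Finset.union_subset (Finset.filter_subset _ _) (Finset.filter_subset _ _), ?_⟩
    rw [biUnion_lift Finset.subset_union_left hU, biUnion_lift Finset.subset_union_right hU']
    ext ω
    rw [Set.mem_union, mem_biUnion_cylT (Finset.filter_subset _ _),
      mem_biUnion_cylT (Finset.filter_subset _ _),
      mem_biUnion_cylT (Finset.union_subset (Finset.filter_subset _ _)
        (Finset.filter_subset _ _))]
    exact (Finset.mem_union).symm

lemma generateFrom_CylU :
    (inferInstance : MeasurableSpace Config) = MeasurableSpace.generateFrom CylU := by
  apply le_antisymm
  · rw [generateFrom_Cyl]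
    apply MeasurableSpace.generateFrom_le
    rintro C ⟨s, f, rfl⟩
    apply MeasurableSpace.measurableSet_generateFrom
    refine ⟨s, {s.filter (fun v => f v = true)},
      by simp [Finset.mem_powerset, Finset.filter_subset], ?_⟩
    have : ⋃ t ∈ ({s.filter (fun v => f v = true)} : Finset (Finset (ℤ × ℤ))), cylT s t =
        cylT s (s.filter (fun v => f v = true)) := by
      simp
    rw [this]
    ext ω
    constructor
    · intro h v hv
      have := h v hv
      rw [this]
      cases hfv : f v <;> simp [cfg, Finset.mem_filter, hv, hfv]
    · intro h v hv
      have := h v hv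
      rw [this]
      cases hfv : f v <;> simp [cfg, Finset.mem_filter, hv, hfv]
  · apply MeasurableSpace.generateFrom_le
    rintro C ⟨s, U, hU, rfl⟩
    exact MeasurableSet.biUnion U.countable_toSet fun t _ => measurableSet_cylT s t

lemma degenerate (μ : Measure Config) [IsProbabilityMeasure μ] (b : Bool)
    (h : ∀ v : ℤ × ℤ, μ {ω : Config | ω v = b} = 1) (A B : Set Config) :
    μ A * μ B ≤ μ (A ∩ B) := by
  set ω0 : Config := fun _ => b with hω0
  have hmeas : ∀ v : ℤ × ℤ, MeasurableSet {ω : Config | ω v = b} := fun v => by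
    have : {ω : Config | ω v = b} = (fun ω : Config => ω v) ⁻¹' {b} := rfl
    rw [this]; exact (measurable_pi_apply v) (measurableSet_singleton b)
  have hN : μ (⋃ v : ℤ × ℤ, {ω : Config | ω v = b}ᶜ) = 0 := by
    apply measure_iUnion_null
    intro v
    rw [measure_compl (hmeas v) (measure_ne_top μ _), h v, measure_univ, tsub_self]
  have hNc : (⋃ v : ℤ × ℤ, {ω : Config | ω v = b}ᶜ)ᶜ = {ω0} := by
    ext ω
    simp only [Set.mem_compl_iff, Set.mem_iUnion, not_exists, Set.mem_setOf_eq, not_not,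
      Set.mem_singleton_iff]
    exact ⟨fun h' => funext fun x => h' x, fun h' x => congrFun h' x⟩
  have key : ∀ S : Set Config, μ S = μ (S ∩ {ω0}) := by
    intro S
    apply le_antisymm
    · calc μ S ≤ μ (S ∩ {ω0} ∪ ⋃ v : ℤ × ℤ, {ω : Config | ω v = b}ᶜ) := by
            apply measure_mono
            intro ω hω
            by_cases hωN : ω ∈ ⋃ v : ℤ × ℤ, {ω : Config | ω v = b}ᶜ
            · exact Or.inr hωN
            · refine Or.inl ⟨hω, ?_⟩
              rw [← hNc]
              exact hωN
        _ ≤ μ (S ∩ {ω0}) + μ (⋃ v : ℤ × ℤ, {ω : Config | ω v = b}ᶜ) := measure_union_le _ _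
        _ = μ (S ∩ {ω0}) := by rw [hN, add_zero]
    · exact measure_mono Set.inter_subset_left
  have hsing : μ {ω0} = 1 := by
    have h2 := key Set.univ
    rw [measure_univ, Set.univ_inter] at h2
    exact h2.symm
  by_cases hA0 : ω0 ∈ A
  · by_cases hB0 : ω0 ∈ B
    · have h2 : (1 : ENNReal) ≤ μ (A ∩ B) := by
        rw [← hsing]
        exact measure_mono (Set.singleton_subset_iff.2 ⟨hA0, hB0⟩)
      exact (mul_le_one' prob_le_one prob_le_one).trans h2
    · have h2 : μ B = 0 := by
        rw [key B]
        have : B ∩ {ω0} = ∅ := by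
          ext x
          simp only [Set.mem_inter_iff, Set.mem_singleton_iff, Set.mem_empty_iff_false,
            iff_false, not_and]
          rintro hxB rfl
          exact hB0 hxB
        rw [this, measure_empty]
      rw [h2, mul_zero]
      exact zero_le
  · have h2 : μ A = 0 := by
      rw [key A]
      have : A ∩ {ω0} = ∅ := by
        ext x
        simp only [Set.mem_inter_iff, Set.mem_singleton_iff, Set.mem_empty_iff_false,
          iff_false, not_and]
        rintro hxA rfl
        exact hA0 hxA
      rw [this, measure_empty]
    rw [h2, zero_mul]
    exact zero_le

end FKGaux

namespace FKGaux

lemma W_notmem_congr {p : ℝ} {s t : Finset (ℤ × ℤ)} {v : ℤ × ℤ} (hv : v ∉ s) :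
    W p s (insert v t) = W p s t :=
  Finset.prod_congr rfl fun u hu => by
    have : u ≠ v := fun h => hv (h ▸ hu)
    simp [Finset.mem_insert, this]

lemma sum_W (p : ℝ) (s : Finset (ℤ × ℤ)) : ∑ t ∈ s.powerset, W p s t = 1 := by
  induction s using Finset.induction_on with
  | empty => simp [W]
  | insert _ _ hv =>
    rename_i v s ih
    rw [Finset.sum_powerset_insert hv]
    have h1 : ∀ t ∈ s.powerset, W p (insert v s) t = (1 - p) * W p s t := by
      intro t ht
      rw [Finset.mem_powerset] at ht
      have hvt : v ∉ t := fun h => hv (ht h)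
      rw [W, Finset.prod_insert hv, if_neg hvt]; rfl
    have h2 : ∀ t ∈ s.powerset, W p (insert v s) (insert v t) = p * W p s t := by
      intro t ht
      rw [W, Finset.prod_insert hv, if_pos (Finset.mem_insert_self _ _)]
      rw [← W, W_notmem_congr hv]
    rw [Finset.sum_congr rfl h1, Finset.sum_congr rfl h2, ← Finset.mul_sum, ← Finset.mul_sum, ih]
    ring

/-- Finite FKG inequality for monotone set functions with Bernoulli weights. -/
lemma fkg_finset {p : ℝ} (hp0 : 0 ≤ p) (hp1 : p ≤ 1) (s : Finset (ℤ × ℤ))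
    (a c : Finset (ℤ × ℤ) → ℝ)
    (ha : ∀ t t', t ⊆ t' → t' ⊆ s → a t ≤ a t')
    (hc : ∀ t t', t ⊆ t' → t' ⊆ s → c t ≤ c t') :
    (∑ t ∈ s.powerset, W p s t * a t) * (∑ t ∈ s.powerset, W p s t * c t) ≤
      ∑ t ∈ s.powerset, W p s t * (a t * c t) := by
  induction s using Finset.induction_on generalizing a c with
  | empty => simp [W]
  | insert _ _ hv =>
    rename_i v s ih
    have h1 : ∀ f : Finset (ℤ × ℤ) → ℝ, ∀ t ∈ s.powerset,
        W p (insert v s) t * f t = (1 - p) * (W p s t * f t) := by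
      intro f t ht
      rw [Finset.mem_powerset] at ht
      have hvt : v ∉ t := fun h => hv (ht h)
      rw [W, Finset.prod_insert hv, if_neg hvt, ← W]; ring
    have h2 : ∀ f : Finset (ℤ × ℤ) → ℝ, ∀ t ∈ s.powerset,
        W p (insert v s) (insert v t) * f (insert v t) = p * (W p s t * f (insert v t)) := by
      intro f t ht
      rw [W, Finset.prod_insert hv, if_pos (Finset.mem_insert_self _ _), ← W,
        W_notmem_congr hv]; ring
    have expand : ∀ f : Finset (ℤ × ℤ) → ℝ,
        ∑ t ∈ (insert v s).powerset, W p (insert v s) t * f t =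
          (1 - p) * (∑ t ∈ s.powerset, W p s t * f t) +
          p * (∑ t ∈ s.powerset, W p s t * f (insert v t)) := by
      intro f
      rw [Finset.sum_powerset_insert hv, Finset.sum_congr rfl (h1 f),
        Finset.sum_congr rfl (h2 f), ← Finset.mul_sum, ← Finset.mul_sum]
    rw [expand a, expand c, expand (fun t => a t * c t)]
    set x0 := ∑ t ∈ s.powerset, W p s t * a t with hx0
    set x1 := ∑ t ∈ s.powerset, W p s t * a (insert v t) with hx1
    set y0 := ∑ t ∈ s.powerset, W p s t * c t with hy0
    set y1 := ∑ t ∈ s.powerset, W p s t * c (insert v t) with hy1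
    have hsub : s ⊆ insert v s := Finset.subset_insert _ _
    have ha' : ∀ t t', t ⊆ t' → t' ⊆ s → a t ≤ a t' := fun t t' h h' =>
      ha t t' h (h'.trans hsub)
    have hc' : ∀ t t', t ⊆ t' → t' ⊆ s → c t ≤ c t' := fun t t' h h' =>
      hc t t' h (h'.trans hsub)
    have hA1 : ∀ t t', t ⊆ t' → t' ⊆ s → a (insert v t) ≤ a (insert v t') := fun t t' h h' =>
      ha _ _ (Finset.insert_subset_insert _ h) (Finset.insert_subset_insert _ h')
    have hC1 : ∀ t t', t ⊆ t' → t' ⊆ s → c (insert v t) ≤ c (insert v t') := fun t t' h h' =>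
      hc _ _ (Finset.insert_subset_insert _ h) (Finset.insert_subset_insert _ h')
    have ih0 := ih a c ha' hc'
    have ih1 := ih (fun t => a (insert v t)) (fun t => c (insert v t)) hA1 hC1
    have hx01 : x0 ≤ x1 := by
      apply Finset.sum_le_sum
      intro t ht
      rw [Finset.mem_powerset] at ht
      exact mul_le_mul_of_nonneg_left
        (ha t (insert v t) (Finset.subset_insert _ _)
          (Finset.insert_subset_insert _ ht)) (W_nonneg hp0 hp1 _ _)
    have hy01 : y0 ≤ y1 := by
      apply Finset.sum_le_sum
      intro t ht
      rw [Finset.mem_powerset] at ht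
      exact mul_le_mul_of_nonneg_left
        (hc t (insert v t) (Finset.subset_insert _ _)
          (Finset.insert_subset_insert _ ht)) (W_nonneg hp0 hp1 _ _)
    have key : 0 ≤ p * (1 - p) * ((x1 - x0) * (y1 - y0)) :=
      mul_nonneg (mul_nonneg hp0 (by linarith))
        (mul_nonneg (by linarith) (by linarith))
    nlinarith [ih0, ih1]

end FKGaux

namespace FKGaux

open scoped symmDiff

lemma harris_incr (p : ℝ) (hp : p ∈ Set.Icc (0:ℝ) 1) (μ : Measure Config)
    (hμ : IsBernoulliProduct p μ) (A B : Set Config)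
    (hA : MeasurableSet A) (hB : MeasurableSet B)
    (hIA : IncreasingEvent A) (hIB : IncreasingEvent B) :
    μ A * μ B ≤ μ (A ∩ B) := by
  haveI := hμ.1
  obtain ⟨hp0, hp1⟩ := hp
  rcases eq_or_lt_of_le hp0 with h0 | hp0'
  · refine degenerate μ false (fun v => ?_) A B
    rw [meas_eval hμ v false, ← h0]
    simp
  rcases eq_or_lt_of_le hp1 with h1 | hp1'
  · refine degenerate μ true (fun v => ?_) A B
    rw [meas_eval hμ v true, h1]
    simp
  have hfin : ∀ S : Set Config, μ S ≠ ⊤ := fun S => measure_ne_top μ S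
  have main : (μ A).toReal * (μ B).toReal ≤ (μ (A ∩ B)).toReal := by
    have hdense := Measure.MeasureDense.of_generateFrom_isSetAlgebra_finite
      (μ := μ) isSetAlgebra_CylU generateFrom_CylU
    refine le_of_forall_pos_le_add fun ε hε => ?_
    obtain ⟨C, hCmem, hCa⟩ := hdense.approx A hA (hfin A) (ε/5) (by linarith)
    obtain ⟨D, hDmem, hDa⟩ := hdense.approx B hB (hfin B) (ε/5) (by linarith)
    obtain ⟨s1, U1, hU1, hCeq⟩ := hCmem
    obtain ⟨s2, U2, hU2, hDeq⟩ := hDmem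
    set s : Finset (ℤ × ℤ) := s1 ∪ s2 with hs
    set U : Finset (Finset (ℤ × ℤ)) := s.powerset.filter (fun t => t ∩ s1 ∈ U1) with hUdef
    set U' : Finset (Finset (ℤ × ℤ)) := s.powerset.filter (fun t => t ∩ s2 ∈ U2) with hU'def
    have hUsub : U ⊆ s.powerset := Finset.filter_subset _ _
    have hU'sub : U' ⊆ s.powerset := Finset.filter_subset _ _
    have hCrep : C = ⋃ t ∈ U, cylT s t := by
      rw [hCeq, biUnion_lift Finset.subset_union_left hU1]
    have hDrep : D = ⋃ t ∈ U', cylT s t := by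
      rw [hDeq, biUnion_lift Finset.subset_union_right hU2]
    have hCmeas : MeasurableSet C := by
      rw [hCrep]
      exact MeasurableSet.biUnion U.countable_toSet fun t _ => measurableSet_cylT s t
    have hDmeas : MeasurableSet D := by
      rw [hDrep]
      exact MeasurableSet.biUnion U'.countable_toSet fun t _ => measurableSet_cylT s t
    have hACmeas : MeasurableSet (A ∆ C) := (hA.diff hCmeas).union (hCmeas.diff hA)
    have hBDmeas : MeasurableSet (B ∆ D) := (hB.diff hDmeas).union (hDmeas.diff hB)
    have hsum : ∀ (E : Set Config), MeasurableSet E →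
        ∑ t ∈ s.powerset, (μ (E ∩ cylT s t)).toReal = (μ E).toReal := by
      intro E hE
      rw [← ENNReal.toReal_sum (fun t _ => hfin _), sum_partition s hE]
    have hWpos : ∀ t, 0 < W p s t := fun t => W_pos hp0' hp1' s t
    have step1 : (μ A).toReal * (μ B).toReal ≤
        ∑ t ∈ s.powerset, W p s t *
          ((μ (A ∩ cylT s t)).toReal / W p s t * ((μ (B ∩ cylT s t)).toReal / W p s t)) := by
      have hcancel : ∀ (E : Set Config), ∀ t ∈ s.powerset,
          W p s t * ((μ (E ∩ cylT s t)).toReal / W p s t) = (μ (E ∩ cylT s t)).toReal := by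
        intro E t _
        rw [mul_comm]
        exact div_mul_cancel₀ _ (hWpos t).ne'
      have e1 : ∑ t ∈ s.powerset, W p s t * ((μ (A ∩ cylT s t)).toReal / W p s t) =
          (μ A).toReal := by
        rw [Finset.sum_congr rfl (hcancel A), hsum A hA]
      have e2 : ∑ t ∈ s.powerset, W p s t * ((μ (B ∩ cylT s t)).toReal / W p s t) =
          (μ B).toReal := by
        rw [Finset.sum_congr rfl (hcancel B), hsum B hB]
      rw [← e1, ← e2]
      exact fkg_finset hp0 hp1 s _ _
        (fun t t' htt' ht's => cond_mono hp0' hp1' hμ hA hIA t t' htt' ht's)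
        (fun t t' htt' ht's => cond_mono hp0' hp1' hμ hB hIB t t' htt' ht's)
    have hWle : ∀ (E : Set Config) (t : Finset (ℤ × ℤ)),
        (μ (E ∩ cylT s t)).toReal ≤ W p s t := by
      intro E t
      have h2 : μ (E ∩ cylT s t) ≤ ENNReal.ofReal (W p s t) := by
        rw [← meas_cylT hμ hp0 hp1 s t]
        exact measure_mono Set.inter_subset_right
      have h3 := ENNReal.toReal_mono ENNReal.ofReal_ne_top h2
      rwa [ENNReal.toReal_ofReal (W_nonneg hp0 hp1 s t)] at h3
    have hprod : ∀ t ∈ s.powerset,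
        (μ (C ∩ cylT s t)).toReal * (μ (D ∩ cylT s t)).toReal ≤
          (μ (C ∩ D ∩ cylT s t)).toReal * W p s t := by
      intro t ht
      by_cases htU : t ∈ U
      · by_cases htU' : t ∈ U'
        · have hC' : C ∩ cylT s t = cylT s t := by
            rw [hCrep]
            apply Set.inter_eq_self_of_subset_right
            intro ω hω
            rw [mem_biUnion_cylT hUsub ω, (mem_cylT_iff (Finset.mem_powerset.1 ht) ω).1 hω]
            exact htU
          have hD' : D ∩ cylT s t = cylT s t := by
            rw [hDrep]
            apply Set.inter_eq_self_of_subset_right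
            intro ω hω
            rw [mem_biUnion_cylT hU'sub ω, (mem_cylT_iff (Finset.mem_powerset.1 ht) ω).1 hω]
            exact htU'
          have hCD' : C ∩ D ∩ cylT s t = cylT s t := by
            rw [Set.inter_assoc, hD', hC']
          rw [hC', hD', hCD', meas_cylT hμ hp0 hp1 s t,
            ENNReal.toReal_ofReal (W_nonneg hp0 hp1 s t)]
        · have hD0 : D ∩ cylT s t = ∅ := by
            rw [hDrep]
            rw [Set.eq_empty_iff_forall_notMem]
            rintro ω ⟨hωD, hωc⟩
            rw [mem_biUnion_cylT hU'sub ω,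
              (mem_cylT_iff (Finset.mem_powerset.1 ht) ω).1 hωc] at hωD
            exact htU' hωD
          rw [hD0, measure_empty]
          simp only [ENNReal.toReal_zero, mul_zero]
          exact mul_nonneg ENNReal.toReal_nonneg (W_nonneg hp0 hp1 s t)
      · have hC0 : C ∩ cylT s t = ∅ := by
          rw [hCrep]
          rw [Set.eq_empty_iff_forall_notMem]
          rintro ω ⟨hωC, hωc⟩
          rw [mem_biUnion_cylT hUsub ω,
            (mem_cylT_iff (Finset.mem_powerset.1 ht) ω).1 hωc] at hωC
          exact htU hωC
        rw [hC0, measure_empty]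
        simp only [ENNReal.toReal_zero, zero_mul]
        exact mul_nonneg ENNReal.toReal_nonneg (W_nonneg hp0 hp1 s t)
    have hper : ∀ t ∈ s.powerset,
        W p s t * ((μ (A ∩ cylT s t)).toReal / W p s t *
            ((μ (B ∩ cylT s t)).toReal / W p s t)) ≤
          (μ (C ∩ D ∩ cylT s t)).toReal + 2 * (μ ((A ∆ C) ∩ cylT s t)).toReal +
            (μ ((B ∆ D) ∩ cylT s t)).toReal := by
      intro t ht
      have hw : 0 < W p s t := hWpos t
      have h1 : (μ (A ∩ cylT s t)).toReal ≤
          (μ (C ∩ cylT s t)).toReal + (μ ((A ∆ C) ∩ cylT s t)).toReal := by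
        have hm : μ (A ∩ cylT s t) ≤ μ (C ∩ cylT s t) + μ ((A ∆ C) ∩ cylT s t) := by
          refine le_trans (measure_mono ?_) (measure_union_le _ _)
          rintro ω ⟨hωA, hωc⟩
          by_cases hωC : ω ∈ C
          · exact Or.inl ⟨hωC, hωc⟩
          · exact Or.inr ⟨Set.mem_symmDiff.2 (Or.inl ⟨hωA, hωC⟩), hωc⟩
        have h3 := ENNReal.toReal_mono
          (ENNReal.add_ne_top.2 ⟨hfin _, hfin _⟩) hm
        rwa [ENNReal.toReal_add (hfin _) (hfin _)] at h3
      have h2 : (μ (B ∩ cylT s t)).toReal ≤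
          (μ (D ∩ cylT s t)).toReal + (μ ((B ∆ D) ∩ cylT s t)).toReal := by
        have hm : μ (B ∩ cylT s t) ≤ μ (D ∩ cylT s t) + μ ((B ∆ D) ∩ cylT s t) := by
          refine le_trans (measure_mono ?_) (measure_union_le _ _)
          rintro ω ⟨hωB, hωc⟩
          by_cases hωD : ω ∈ D
          · exact Or.inl ⟨hωD, hωc⟩
          · exact Or.inr ⟨Set.mem_symmDiff.2 (Or.inl ⟨hωB, hωD⟩), hωc⟩
        have h3 := ENNReal.toReal_mono
          (ENNReal.add_ne_top.2 ⟨hfin _, hfin _⟩) hm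
        rwa [ENNReal.toReal_add (hfin _) (hfin _)] at h3
      have e2 := hprod t ht
      have hxc : (μ (C ∩ cylT s t)).toReal ≤ W p s t := hWle C t
      have hxd : (μ (D ∩ cylT s t)).toReal ≤ W p s t := hWle D t
      have hda : (μ ((A ∆ C) ∩ cylT s t)).toReal ≤ W p s t := hWle _ t
      have hdb : (μ ((B ∆ D) ∩ cylT s t)).toReal ≤ W p s t := hWle _ t
      have hna : (0:ℝ) ≤ (μ (A ∩ cylT s t)).toReal := ENNReal.toReal_nonneg
      have hnb : (0:ℝ) ≤ (μ (B ∩ cylT s t)).toReal := ENNReal.toReal_nonneg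
      have hnc : (0:ℝ) ≤ (μ (C ∩ cylT s t)).toReal := ENNReal.toReal_nonneg
      have hnd : (0:ℝ) ≤ (μ (D ∩ cylT s t)).toReal := ENNReal.toReal_nonneg
      have hnda : (0:ℝ) ≤ (μ ((A ∆ C) ∩ cylT s t)).toReal := ENNReal.toReal_nonneg
      have hndb : (0:ℝ) ≤ (μ ((B ∆ D) ∩ cylT s t)).toReal := ENNReal.toReal_nonneg
      have key : (μ (A ∩ cylT s t)).toReal * (μ (B ∩ cylT s t)).toReal ≤
          ((μ (C ∩ D ∩ cylT s t)).toReal + 2 * (μ ((A ∆ C) ∩ cylT s t)).toReal +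
            (μ ((B ∆ D) ∩ cylT s t)).toReal) * W p s t := by
        have e1 : (μ (A ∩ cylT s t)).toReal * (μ (B ∩ cylT s t)).toReal ≤
            ((μ (C ∩ cylT s t)).toReal + (μ ((A ∆ C) ∩ cylT s t)).toReal) *
              ((μ (D ∩ cylT s t)).toReal + (μ ((B ∆ D) ∩ cylT s t)).toReal) :=
          mul_le_mul h1 h2 hnb (by linarith)
        nlinarith [mul_le_mul_of_nonneg_right hxc hndb,
          mul_le_mul_of_nonneg_left hxd hnda,
          mul_le_mul_of_nonneg_left hdb hnda]
      have heq : W p s t * ((μ (A ∩ cylT s t)).toReal / W p s t *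
          ((μ (B ∩ cylT s t)).toReal / W p s t)) =
          (μ (A ∩ cylT s t)).toReal * (μ (B ∩ cylT s t)).toReal / W p s t := by
        field_simp
      rw [heq, div_le_iff₀ hw]
      exact key
    have step2 : ∑ t ∈ s.powerset, W p s t *
          ((μ (A ∩ cylT s t)).toReal / W p s t * ((μ (B ∩ cylT s t)).toReal / W p s t)) ≤
        (μ (C ∩ D)).toReal + 2 * (μ (A ∆ C)).toReal + (μ (B ∆ D)).toReal := by
      calc ∑ t ∈ s.powerset, W p s t *
            ((μ (A ∩ cylT s t)).toReal / W p s t * ((μ (B ∩ cylT s t)).toReal / W p s t)) ≤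
          ∑ t ∈ s.powerset, ((μ (C ∩ D ∩ cylT s t)).toReal +
            2 * (μ ((A ∆ C) ∩ cylT s t)).toReal + (μ ((B ∆ D) ∩ cylT s t)).toReal) :=
            Finset.sum_le_sum hper
        _ = (μ (C ∩ D)).toReal + 2 * (μ (A ∆ C)).toReal + (μ (B ∆ D)).toReal := by
            rw [Finset.sum_add_distrib, Finset.sum_add_distrib, ← Finset.mul_sum,
              hsum (C ∩ D) (hCmeas.inter hDmeas), hsum (A ∆ C) hACmeas, hsum (B ∆ D) hBDmeas]
    have step3 : (μ (C ∩ D)).toReal ≤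
        (μ (A ∩ B)).toReal + ((μ (A ∆ C)).toReal + (μ (B ∆ D)).toReal) := by
      have hsub : C ∩ D ⊆ (A ∩ B) ∪ ((A ∆ C) ∪ (B ∆ D)) := by
        rintro ω ⟨hωC, hωD⟩
        by_cases hωA : ω ∈ A
        · by_cases hωB : ω ∈ B
          · exact Or.inl ⟨hωA, hωB⟩
          · exact Or.inr (Or.inr (Set.mem_symmDiff.2 (Or.inr ⟨hωD, hωB⟩)))
        · exact Or.inr (Or.inl (Set.mem_symmDiff.2 (Or.inr ⟨hωC, hωA⟩)))
      have hm : μ (C ∩ D) ≤ μ (A ∩ B) + (μ (A ∆ C) + μ (B ∆ D)) :=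
        le_trans (measure_mono hsub)
          (le_trans (measure_union_le _ _) (add_le_add_right (measure_union_le _ _) _))
      have h3 := ENNReal.toReal_mono
        (ENNReal.add_ne_top.2 ⟨hfin _, ENNReal.add_ne_top.2 ⟨hfin _, hfin _⟩⟩) hm
      rwa [ENNReal.toReal_add (hfin _) (ENNReal.add_ne_top.2 ⟨hfin _, hfin _⟩),
        ENNReal.toReal_add (hfin _) (hfin _)] at h3
    have hACr : (μ (A ∆ C)).toReal < ε/5 := by
      have h3 := (ENNReal.toReal_lt_toReal (hfin _) ENNReal.ofReal_ne_top).2 hCa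
      rwa [ENNReal.toReal_ofReal (by linarith : (0:ℝ) ≤ ε/5)] at h3
    have hBDr : (μ (B ∆ D)).toReal < ε/5 := by
      have h3 := (ENNReal.toReal_lt_toReal (hfin _) ENNReal.ofReal_ne_top).2 hDa
      rwa [ENNReal.toReal_ofReal (by linarith : (0:ℝ) ≤ ε/5)] at h3
    linarith [step1, step2, step3]
  have hofr : μ A * μ B = ENNReal.ofReal ((μ A).toReal * (μ B).toReal) := by
    rw [ENNReal.ofReal_mul ENNReal.toReal_nonneg, ENNReal.ofReal_toReal (hfin A),
      ENNReal.ofReal_toReal (hfin B)]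
  rw [hofr, ← ENNReal.ofReal_toReal (hfin (A ∩ B))]
  exact ENNReal.ofReal_le_ofReal main

end FKGaux

namespace FKGaux

lemma measurable_flip : Measurable (fun ω : Config => fun v => !(ω v)) :=
  measurable_pi_lambda _ fun v =>
    (measurable_from_top (f := fun b : Bool => !b)).comp (measurable_pi_apply v)

end FKGaux

/-- **FKG/Harris inequality.** Consider the product Bernoulli(`p`) measure
`P_p` on configurations `ω : ℤ × ℤ → Bool`. If `A` and `B` are measurable events that are
both increasing, or both decreasing, then `P_p(A ∩ B) ≥ P_p(A)·P_p(B)`. -/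
theorem fkg_inequality (p : ℝ) (hp : p ∈ Set.Icc (0 : ℝ) 1)
    (μ : Measure Config) (hμ : IsBernoulliProduct p μ)
    (A B : Set Config) (hA : MeasurableSet A) (hB : MeasurableSet B)
    (hmono : (IncreasingEvent A ∧ IncreasingEvent B) ∨
      (DecreasingEvent A ∧ DecreasingEvent B)) :
    μ A * μ B ≤ μ (A ∩ B) := by
  rcases hmono with ⟨hIA, hIB⟩ | ⟨hDA, hDB⟩
  · exact FKGaux.harris_incr p hp μ hμ A B hA hB hIA hIB
  · haveI := hμ.1
    set F := fun ω : Config => fun v => !(ω v) with hF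
    have hFmeas : Measurable F := FKGaux.measurable_flip
    have hFF : ∀ ω, F (F ω) = ω := fun ω => funext fun v => Bool.not_not _
    have hpre : ∀ S : Set Config, F ⁻¹' (F ⁻¹' S) = S := by
      intro S
      ext ω
      simp only [Set.mem_preimage, hFF]
    set ν := Measure.map F μ with hν
    have hνB : IsBernoulliProduct (1 - p) ν := by
      constructor
      · exact Measure.isProbabilityMeasure_map hFmeas.aemeasurable
      · intro s f
        have hms : MeasurableSet {ω : Config | ∀ v ∈ s, ω v = f v} :=
          FKGaux.measurableSet_cylF s f
        rw [hν, Measure.map_apply hFmeas hms]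
        have hpre2 : F ⁻¹' {ω : Config | ∀ v ∈ s, ω v = f v} =
            {ω : Config | ∀ v ∈ s, ω v = !(f v)} := by
          ext ω
          simp only [Set.mem_preimage, Set.mem_setOf_eq, hF]
          constructor
          · intro h v hv
            have := h v hv
            rw [← this, Bool.not_not]
          · intro h v hv
            rw [h v hv, Bool.not_not]
        rw [hpre2, hμ.2 s (fun v => !(f v))]
        refine Finset.prod_congr rfl fun v _ => ?_
        cases hfv : f v
        · simp only [Bool.not_false, if_true, Bool.false_eq_true, if_false]
          congr 1
          ring
        · simp only [Bool.not_true, Bool.false_eq_true, if_false, if_true]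
    have h1p : (1 - p) ∈ Set.Icc (0:ℝ) 1 := ⟨by linarith [hp.2], by linarith [hp.1]⟩
    have hIA : IncreasingEvent (F ⁻¹' A) := by
      intro ω ω' hle h
      refine hDA (F ω) (F ω') (fun v => ?_) h
      have := hle v
      rw [hF]
      cases hωv : ω v <;> cases hω'v : ω' v <;> simp_all
    have hIB : IncreasingEvent (F ⁻¹' B) := by
      intro ω ω' hle h
      refine hDB (F ω) (F ω') (fun v => ?_) h
      have := hle v
      rw [hF]
      cases hωv : ω v <;> cases hω'v : ω' v <;> simp_all
    have hkey := FKGaux.harris_incr (1 - p) h1p ν hνB (F ⁻¹' A) (F ⁻¹' B)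
      (hFmeas hA) (hFmeas hB) hIA hIB
    rw [hν, Measure.map_apply hFmeas (hFmeas hA), Measure.map_apply hFmeas (hFmeas hB),
      Measure.map_apply hFmeas ((hFmeas hA).inter (hFmeas hB)), Set.preimage_inter] at hkey
    simp only [hpre] at hkey
    exact hkey
end

section
/- Consider the product Bernoulli(p) measure P_p on configurations ω : ℤ × ℤ → Bool. If (A_i)_{i ∈ I} is a finite family of measurable decreasing events, then P_p(⋂_{i ∈ I} A_i) ≥ ∏_{i ∈ I} P_p(A_i). -/
open MeasureTheory

namespace FKGaux

open MeasureTheory MeasurableSpace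
open scoped ENNReal symmDiff


/-- atoms (cylinder atoms) over an index type -/
def atoms (ι : Type*) : Set (Set (ι → Bool)) :=
  {A | ∃ (t : Finset ι) (g : ι → Bool), A = {x | ∀ i ∈ t, x i = g i}}

lemma measurableSet_atom {ι : Type*} (t : Finset ι) (g : ι → Bool) :
    MeasurableSet {x : ι → Bool | ∀ i ∈ t, x i = g i} := by
  have h : {x : ι → Bool | ∀ i ∈ t, x i = g i}
      = ⋂ i ∈ t, (fun x : ι → Bool => x i) ⁻¹' {g i} := by
    ext x; simp
  rw [h]
  exact MeasurableSet.biInter t.countable_toSet fun i _ =>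
    (measurable_pi_apply i) (measurableSet_singleton _)

lemma pi_eq_generateFrom_atoms (ι : Type*) :
    (MeasurableSpace.pi : MeasurableSpace (ι → Bool)) = generateFrom (atoms ι) := by
  refine le_antisymm ?_ (generateFrom_le ?_)
  · refine iSup_le fun i => ?_
    intro A hA
    obtain ⟨sB, -, rfl⟩ := hA
    have h : (fun x : ι → Bool => x i) ⁻¹' sB = ⋃ b ∈ sB, {x : ι → Bool | x i = b} := by
      ext x; simp [eq_comm]
    rw [h]
    refine MeasurableSet.biUnion sB.to_countable fun b _ => ?_
    refine measurableSet_generateFrom ⟨{i}, fun _ => b, ?_⟩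
    ext x; simp
  · rintro A ⟨t, g, rfl⟩
    exact measurableSet_atom t g

lemma isPiSystem_atoms (ι : Type*) [DecidableEq ι] : IsPiSystem (atoms ι) := by
  rintro A ⟨t₁, g₁, rfl⟩ B ⟨t₂, g₂, rfl⟩ hne
  obtain ⟨x, hx1, hx2⟩ := hne
  simp only [Set.mem_inter_iff, Set.mem_setOf_eq] at hx1 hx2
  refine ⟨t₁ ∪ t₂, fun i => if i ∈ t₁ then g₁ i else g₂ i, ?_⟩
  ext y
  simp only [Set.mem_inter_iff, Set.mem_setOf_eq, Finset.mem_union]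
  constructor
  · rintro ⟨h1, h2⟩ i hi
    by_cases h : i ∈ t₁
    · simp [h, h1 i h]
    · rcases hi with hi | hi
      · exact absurd hi h
      · simp [h, h2 i hi]
  · intro h
    constructor
    · intro i hi
      have := h i (Or.inl hi); simpa [hi] using this
    · intro i hi
      have := h i (Or.inr hi)
      by_cases h1 : i ∈ t₁
      · rw [if_pos h1] at this
        rw [this, ← hx1 i h1, hx2 i hi]
      · rwa [if_neg h1] at this

abbrev V : Type := ℤ × ℤ

/-- weight -/
noncomputable def w (p : ℝ) (b : Bool) : ℝ≥0∞ := ENNReal.ofReal (if b then p else 1 - p)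

def atomEv (t : Finset V) (f : V → Bool) : Set Config := {ω | ∀ v ∈ t, ω v = f v}

/-- `D` depends only on coordinates in `S` -/
def DepOn (D : Set Config) (S : Set V) : Prop :=
  ∀ ω ω' : Config, (∀ v ∈ S, ω v = ω' v) → (ω ∈ D ↔ ω' ∈ D)

lemma DepOn.mono {D : Set Config} {S S' : Set V} (h : DepOn D S) (hss : S ⊆ S') :
    DepOn D S' := fun ω ω' hag => h ω ω' fun v hv => hag v (hss hv)

lemma measurableSet_atomEv (t : Finset V) (f : V → Bool) : MeasurableSet (atomEv t f) :=
  measurableSet_atom t f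

/-- extension of a pattern on Λ by `false` -/
def extΛ (Λ : Finset V) (η : {v : V // v ∈ Λ} → Bool) : Config :=
  fun v => if h : v ∈ Λ then η ⟨v, h⟩ else false

lemma DepOn.measurableSet {D : Set Config} {Λ : Finset V} (h : DepOn D ↑Λ) :
    MeasurableSet D := by
  have hD : D = ⋃ (η : {v : V // v ∈ Λ} → Bool), ⋃ (_ : extΛ Λ η ∈ D), atomEv Λ (extΛ Λ η) := by
    ext ω
    simp only [Set.mem_iUnion]
    constructor
    · intro hω
      refine ⟨fun i => ω i.1, ?_, ?_⟩
      · exact (h ω _ (fun v hv => by simp [extΛ, Finset.mem_coe.mp hv])).mp hω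
      · intro v hv; simp [extΛ, Finset.mem_coe.mp hv]
    · rintro ⟨η, hη, hag⟩
      exact (h ω _ (fun v hv => by rw [hag v hv])).mpr hη
  rw [hD]
  exact MeasurableSet.iUnion fun η => MeasurableSet.iUnion fun _ => measurableSet_atomEv _ _

section Key

variable {p : ℝ} {μ : Measure Config}

/-- The key independence lemma: an atom on `Λ` is independent of any event
depending only on coordinates outside `Λ`. -/
lemma key_indep (hp : p ∈ Set.Icc (0:ℝ) 1) (hμ : IsBernoulliProduct p μ)
    (Λ : Finset V) (f : V → Bool) :
    ∀ C : Set Config, MeasurableSet C → DepOn C (↑Λ)ᶜ →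
      μ (atomEv Λ f ∩ C) = (∏ v ∈ Λ, w p (f v)) * μ C := by
  haveI : IsProbabilityMeasure μ := hμ.1
  set ι' := {v : V // v ∉ Λ}
  set r : Config → (ι' → Bool) := fun ω i => ω i.1 with hr_def
  have hr : Measurable r := measurable_pi_lambda _ fun i => measurable_pi_apply _
  -- step 1: C is measurable w.r.t. the comap σ-algebra
  have hcomap : ∀ C : Set Config, MeasurableSet C → DepOn C (↑Λ)ᶜ →
      MeasurableSet[MeasurableSpace.comap r MeasurableSpace.pi] C := by
    intro C hC hdep
    set e : (ι' → Bool) → Config := fun x v => if h : v ∉ Λ then x ⟨v, h⟩ else false with he_def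
    have he : Measurable e := by
      refine measurable_pi_lambda _ fun v => ?_
      by_cases h : v ∉ Λ
      · simpa [he_def, h] using measurable_pi_apply (⟨v, h⟩ : ι')
      · simp only [he_def, dif_neg h]; exact measurable_const
    have hCeq : r ⁻¹' (e ⁻¹' C) = C := by
      ext ω
      simp only [Set.mem_preimage]
      exact hdep (e (r ω)) ω (fun v hv => by
        simp only [Set.mem_compl_iff, Finset.mem_coe] at hv
        simp [he_def, hr_def, hv])
    exact ⟨e ⁻¹' C, hC.preimage he, hCeq⟩
  -- step 2: induction over the comap σ-algebra
  have main : ∀ ⦃C : Set Config⦄, MeasurableSet[MeasurableSpace.comap r MeasurableSpace.pi] C →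
      μ (atomEv Λ f ∩ C) = (∏ v ∈ Λ, w p (f v)) * μ C := by
    have h_eq : MeasurableSpace.comap r MeasurableSpace.pi
        = generateFrom ((Set.preimage r) '' atoms ι') := by
      rw [pi_eq_generateFrom_atoms ι', MeasurableSpace.comap_generateFrom]
    have h_pi : IsPiSystem ((Set.preimage r) '' atoms ι') := by
      rintro A ⟨A', hA', rfl⟩ B ⟨B', hB', rfl⟩ hne
      rw [← Set.preimage_inter]
      refine ⟨A' ∩ B', ?_, rfl⟩
      obtain ⟨x, hx⟩ := hne
      exact isPiSystem_atoms ι' A' hA' B' hB' ⟨r x, hx⟩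
    have hle : MeasurableSpace.comap r MeasurableSpace.pi ≤ MeasurableSpace.pi :=
      hr.comap_le
    refine MeasurableSpace.induction_on_inter (m := MeasurableSpace.comap r MeasurableSpace.pi) h_eq h_pi ?_ ?_ ?_ ?_
    · simp
    · rintro C hC
      obtain ⟨A, ⟨t, g, rfl⟩, rfl⟩ := hC
      -- translate to an atom on V
      set gg : V → Bool := fun v => if h : v ∉ Λ then g ⟨v, h⟩ else f v with hgg_def
      set t' : Finset V := t.map ⟨Subtype.val, Subtype.val_injective⟩ with ht'_def
      have hmem_t' : ∀ v : V, v ∈ t' ↔ ∃ h : v ∉ Λ, (⟨v, h⟩ : ι') ∈ t := by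
        intro v
        simp only [ht'_def, Finset.mem_map, Function.Embedding.coeFn_mk]
        constructor
        · rintro ⟨i, hi, rfl⟩; exact ⟨i.2, by simpa using hi⟩
        · rintro ⟨h, hi⟩; exact ⟨⟨v, h⟩, hi, rfl⟩
      have hC_eq : r ⁻¹' {x | ∀ i ∈ t, x i = g i} = atomEv t' gg := by
        ext ω
        simp only [Set.mem_preimage, Set.mem_setOf_eq, atomEv]
        constructor
        · intro h v hv
          obtain ⟨hnot, hmem⟩ := (hmem_t' v).mp hv
          simpa [hgg_def, hnot] using h ⟨v, hnot⟩ hmem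
        · intro h i hi
          have := h i.1 ((hmem_t' i.1).mpr ⟨i.2, by simpa using hi⟩)
          simpa [hgg_def, i.2] using this
      have hafΛ : atomEv Λ f = atomEv Λ gg := by
        unfold atomEv
        ext ω
        refine forall₂_congr fun v hv => ?_
        simp [hgg_def, hv]
      have hdisj : Disjoint Λ t' := by
        rw [Finset.disjoint_left]
        intro v hv hv'
        exact ((hmem_t' v).mp hv').1 hv
      have hunion : atomEv Λ f ∩ r ⁻¹' {x | ∀ i ∈ t, x i = g i} = atomEv (Λ ∪ t') gg := by
        rw [hC_eq, hafΛ]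
        ext ω
        simp only [atomEv, Set.mem_inter_iff, Set.mem_setOf_eq, Finset.mem_union]
        constructor
        · rintro ⟨h1, h2⟩ v hv; rcases hv with hv | hv
          · exact h1 v hv
          · exact h2 v hv
        · intro h; exact ⟨fun v hv => h v (Or.inl hv), fun v hv => h v (Or.inr hv)⟩
      rw [hunion, hC_eq]
      have h1 := hμ.2 (Λ ∪ t') gg
      have h2 := hμ.2 t' gg
      have h3 : (atomEv (Λ ∪ t') gg : Set Config) = {ω | ∀ v ∈ Λ ∪ t', ω v = gg v} := rfl
      have h4 : (atomEv t' gg : Set Config) = {ω | ∀ v ∈ t', ω v = gg v} := rfl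
      rw [h3, h1, h4, h2, Finset.prod_union hdisj]
      congr 1
      refine Finset.prod_congr rfl fun v hv => ?_
      simp [w, hgg_def, hv]
    · rintro C hCm hC
      have hCm' : MeasurableSet C := hle C hCm
      have hfin : μ (atomEv Λ f ∩ C) ≠ ⊤ := measure_ne_top μ _
      have hsub : atomEv Λ f ∩ Cᶜ = atomEv Λ f \ (atomEv Λ f ∩ C) := by
        ext ω; simp only [Set.mem_inter_iff, Set.mem_compl_iff, Set.mem_diff]; tauto
      rw [hsub, measure_diff Set.inter_subset_left ((measurableSet_atomEv Λ f).inter hCm').nullMeasurableSet hfin]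
      have hatom : μ (atomEv Λ f) = ∏ v ∈ Λ, w p (f v) := hμ.2 Λ f
      rw [hatom, hC, measure_compl hCm' (measure_ne_top μ C), measure_univ]
      rw [ENNReal.mul_sub (a := ∏ v ∈ Λ, w p (f v)) (b := 1) (c := μ C)
        (fun _ _ => ENNReal.prod_ne_top (fun v _ => ENNReal.ofReal_ne_top)), mul_one]
    · rintro g hdisj hgm hg
      rw [Set.inter_iUnion]
      rw [measure_iUnion ?_ (fun i => (measurableSet_atomEv Λ f).inter (hle _ (hgm i)))]
      · rw [measure_iUnion hdisj (fun i => hle _ (hgm i))]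
        simp_rw [hg]
        rw [ENNReal.tsum_mul_left]
      · intro i j hij
        exact (hdisj hij).mono Set.inter_subset_right Set.inter_subset_right
  intro C hC hdep
  exact main (hcomap C hC hdep)

end Key

section EL

variable (p : ℝ)

noncomputable def EL : List V → (Config → ℝ) → ℝ
  | [], f => f fun _ => false
  | v :: l, f => (1 - p) * EL l (fun ω => f (Function.update ω v false))
      + p * EL l (fun ω => f (Function.update ω v true))

def Anti (f : Config → ℝ) : Prop := ∀ ω ω' : Config, ω ≤ ω' → f ω' ≤ f ω
def NN (f : Config → ℝ) : Prop := ∀ ω, 0 ≤ f ω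

variable {p}

lemma update_le_update {ω ω' : Config} (h : ω ≤ ω') (v : V) (b : Bool) :
    Function.update ω v b ≤ Function.update ω' v b := by
  intro x
  rcases eq_or_ne x v with rfl | hx
  · simp
  · simpa [Function.update_apply, hx] using h x

lemma update_false_le_true (ω : Config) (v : V) :
    Function.update ω v false ≤ Function.update ω v true := by
  intro x
  rcases eq_or_ne x v with rfl | hx
  · simp
  · simp [Function.update_apply, hx]

lemma Anti.updateFn {f : Config → ℝ} (hf : Anti f) (v : V) (b : Bool) :
    Anti (fun ω => f (Function.update ω v b)) :=
  fun ω ω' h => hf _ _ (update_le_update h v b)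

lemma EL_const (c : ℝ) : ∀ l : List V, EL p l (fun _ => c) = c
  | [] => rfl
  | v :: l => by
    show (1 - p) * EL p l (fun _ => c) + p * EL p l (fun _ => c) = c
    rw [EL_const c l]; ring

lemma EL_mono (hp : p ∈ Set.Icc (0:ℝ) 1) : ∀ (l : List V) (f g : Config → ℝ),
    (∀ ω, f ω ≤ g ω) → EL p l f ≤ EL p l g := by
  intro l
  induction l with
  | nil => intro f g h; exact h _
  | cons v l ih =>
    intro f g h
    simp only [EL]
    have h1 := ih _ _ (fun ω => h (Function.update ω v false))
    have h2 := ih _ _ (fun ω => h (Function.update ω v true))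
    have hp1 : (0:ℝ) ≤ 1 - p := by linarith [hp.2]
    exact add_le_add (mul_le_mul_of_nonneg_left h1 hp1) (mul_le_mul_of_nonneg_left h2 hp.1)

lemma EL_nonneg (hp : p ∈ Set.Icc (0:ℝ) 1) (l : List V) (f : Config → ℝ) (hf : NN f) :
    0 ≤ EL p l f := by
  have := EL_mono hp l (fun _ => 0) f (fun ω => hf ω)
  rwa [EL_const] at this

lemma EL_harris2 (hp : p ∈ Set.Icc (0:ℝ) 1) : ∀ (l : List V) (f g : Config → ℝ),
    Anti f → Anti g → EL p l f * EL p l g ≤ EL p l (fun ω => f ω * g ω) := by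
  intro l
  induction l with
  | nil => intro f g _ _; exact le_of_eq rfl
  | cons v l ih =>
    intro f g hf hg
    have hp0 := hp.1
    have hp1 : (0:ℝ) ≤ 1 - p := by linarith [hp.2]
    simp only [EL]
    have hab : EL p l (fun ω => f (Function.update ω v true))
        ≤ EL p l (fun ω => f (Function.update ω v false)) :=
      EL_mono hp l _ _ (fun ω => hf _ _ (update_false_le_true ω v))
    have hxy : EL p l (fun ω => g (Function.update ω v true))
        ≤ EL p l (fun ω => g (Function.update ω v false)) :=
      EL_mono hp l _ _ (fun ω => hg _ _ (update_false_le_true ω v))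
    have h0 := ih (fun ω => f (Function.update ω v false)) (fun ω => g (Function.update ω v false))
      (hf.updateFn v false) (hg.updateFn v false)
    have h1 := ih (fun ω => f (Function.update ω v true)) (fun ω => g (Function.update ω v true))
      (hf.updateFn v true) (hg.updateFn v true)
    set a := EL p l (fun ω => f (Function.update ω v false)) with ha
    set b := EL p l (fun ω => f (Function.update ω v true)) with hb
    set x := EL p l (fun ω => g (Function.update ω v false)) with hx
    set y := EL p l (fun ω => g (Function.update ω v true)) with hy
    set A := EL p l (fun ω => f (Function.update ω v false) * g (Function.update ω v false)) with hA
    set B := EL p l (fun ω => f (Function.update ω v true) * g (Function.update ω v true)) with hB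
    nlinarith [mul_nonneg (mul_nonneg hp0 hp1) (mul_nonneg (sub_nonneg.2 hab) (sub_nonneg.2 hxy))]

lemma anti_nn_prod {I : Type*} (s : Finset I) (f : I → Config → ℝ)
    (ha : ∀ i ∈ s, Anti (f i)) (hn : ∀ i ∈ s, NN (f i)) :
    Anti (fun ω => ∏ i ∈ s, f i ω) ∧ NN (fun ω => ∏ i ∈ s, f i ω) := by
  classical
  induction s using Finset.induction with
  | empty => exact ⟨fun ω ω' _ => le_refl _, fun ω => by simp⟩
  | @insert a s hmem ih =>
    obtain ⟨iha, ihn⟩ := ih (fun i hi => ha i (Finset.mem_insert_of_mem hi))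
      (fun i hi => hn i (Finset.mem_insert_of_mem hi))
    have haa := ha a (Finset.mem_insert_self a s)
    have hna := hn a (Finset.mem_insert_self a s)
    constructor
    · intro ω ω' h
      simp only [Finset.prod_insert hmem]
      exact mul_le_mul (haa ω ω' h) (iha ω ω' h) (ihn ω') (hna ω)
    · intro ω
      simp only [Finset.prod_insert hmem]
      exact mul_nonneg (hna ω) (ihn ω)

lemma EL_prod (hp : p ∈ Set.Icc (0:ℝ) 1) {I : Type*} (s : Finset I) (f : I → Config → ℝ)
    (ha : ∀ i ∈ s, Anti (f i)) (hn : ∀ i ∈ s, NN (f i)) (l : List V) :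
    ∏ i ∈ s, EL p l (f i) ≤ EL p l (fun ω => ∏ i ∈ s, f i ω) := by
  classical
  induction s using Finset.induction with
  | empty => simp [EL_const]
  | @insert a s hmem ih =>
    have ha' := fun i hi => ha i (Finset.mem_insert_of_mem hi)
    have hn' := fun i hi => hn i (Finset.mem_insert_of_mem hi)
    obtain ⟨iha, ihn⟩ := anti_nn_prod s f ha' hn'
    have step1 : ∏ i ∈ insert a s, EL p l (f i)
        ≤ EL p l (f a) * EL p l (fun ω => ∏ i ∈ s, f i ω) := by
      rw [Finset.prod_insert hmem]
      exact mul_le_mul_of_nonneg_left (ih ha' hn')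
        (EL_nonneg hp l _ (hn a (Finset.mem_insert_self a s)))
    refine step1.trans ?_
    have step2 := EL_harris2 hp l (f a) (fun ω => ∏ i ∈ s, f i ω)
      (ha a (Finset.mem_insert_self a s)) iha
    refine step2.trans (le_of_eq ?_)
    congr 1
    funext ω
    rw [Finset.prod_insert hmem]

end EL

section Bridge

variable {p : ℝ} {μ : Measure Config}

lemma measurable_updateConst (v : V) (b : Bool) :
    Measurable (fun ω : Config => Function.update ω v b) := by
  refine measurable_pi_lambda _ fun x => ?_
  simp only [Function.update_apply]
  rcases eq_or_ne x v with rfl | hx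
  · simp only [if_pos rfl]; exact measurable_const
  · simp only [if_neg hx]; exact measurable_pi_apply x

lemma bridge (hp : p ∈ Set.Icc (0:ℝ) 1) (hμ : IsBernoulliProduct p μ) :
    ∀ (l : List V) (D : Set Config), MeasurableSet D → DepOn D {v | v ∈ l} →
      (μ D).toReal = EL p l (Set.indicator D 1) := by
  haveI : IsProbabilityMeasure μ := hμ.1
  intro l
  induction l with
  | nil =>
    intro D hD hdep
    by_cases h : (fun _ : V => false) ∈ D
    · have hDuniv : D = Set.univ := by
        ext ω
        simp only [Set.mem_univ, iff_true]
        exact (hdep _ ω (fun v hv => absurd hv (by simp))).mp h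
      rw [hDuniv]
      simp [EL, measure_univ]
    · have hDempty : D = ∅ := by
        ext ω
        simp only [Set.mem_empty_iff_false, iff_false]
        intro hω
        exact h ((hdep ω _ (fun v hv => absurd hv (by simp))).mp hω)
      rw [hDempty]
      simp [EL]
  | cons v l ih =>
    intro D hD hdep
    have hupd : ∀ b : Bool, ∀ ω : Config, ω v = b → Function.update ω v b = ω := by
      intro b ω hω
      funext x
      rcases eq_or_ne x v with rfl | hx
      · simp [hω]
      · simp [Function.update_apply, hx]
    set Df := (fun ω : Config => Function.update ω v false) ⁻¹' D with hDf
    set Dt := (fun ω : Config => Function.update ω v true) ⁻¹' D with hDt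
    have hDfm : MeasurableSet Df := hD.preimage (measurable_updateConst v false)
    have hDtm : MeasurableSet Dt := hD.preimage (measurable_updateConst v true)
    -- each Db depends only on l, and is invariant on coordinate v
    have hdep_b : ∀ b : Bool, DepOn ((fun ω : Config => Function.update ω v b) ⁻¹' D) {x | x ∈ l} := by
      intro b ω ω' hag
      refine hdep _ _ fun x hx => ?_
      simp only [Set.mem_setOf_eq, List.mem_cons] at hx
      rcases eq_or_ne x v with rfl | hxv
      · simp
      · rcases hx with rfl | hx
        · exact absurd rfl hxv
        · simp only [Function.update_apply, if_neg hxv]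
          exact hag x hx
    have hdep_b' : ∀ b : Bool, DepOn ((fun ω : Config => Function.update ω v b) ⁻¹' D)
        (↑({v} : Finset V))ᶜ := by
      intro b ω ω' hag
      have : Function.update ω v b = Function.update ω' v b := by
        funext x
        rcases eq_or_ne x v with rfl | hx
        · simp
        · simp only [Function.update_apply, if_neg hx]
          exact hag x (by simp [hx])
      simp only [Set.mem_preimage, this]
    -- split the measure
    have hsplit_set : ∀ b : Bool, D ∩ {ω : Config | ω v = b}
        = atomEv {v} (fun _ => b) ∩ ((fun ω : Config => Function.update ω v b) ⁻¹' D) := by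
      intro b
      ext ω
      simp only [Set.mem_inter_iff, Set.mem_setOf_eq, atomEv, Set.mem_preimage,
        Finset.mem_singleton]
      constructor
      · rintro ⟨hω, hv⟩
        exact ⟨fun x hx => hx ▸ hv, by rwa [hupd b ω hv]⟩
      · rintro ⟨h1, h2⟩
        have hv : ω v = b := h1 v rfl
        exact ⟨by rwa [hupd b ω hv] at h2, hv⟩
    have hmeas_b : ∀ b : Bool, μ (D ∩ {ω : Config | ω v = b}) = w p b * μ ((fun ω : Config => Function.update ω v b) ⁻¹' D) := by
      intro b
      rw [hsplit_set b]
      rw [key_indep hp hμ {v} (fun _ => b) _ (hD.preimage (measurable_updateConst v b)) (hdep_b' b)]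
      rw [Finset.prod_singleton]
    have hDsplit : μ D = μ (D ∩ {ω : Config | ω v = false}) + μ (D ∩ {ω : Config | ω v = true}) := by
      have hDeq : D = (D ∩ {ω : Config | ω v = false}) ∪ (D ∩ {ω : Config | ω v = true}) := by
        ext ω
        rcases Bool.dichotomy (ω v) with h | h <;> simp [h]
      have hdisj2 : Disjoint (D ∩ {ω : Config | ω v = false}) (D ∩ {ω : Config | ω v = true}) := by
        rw [Set.disjoint_left]
        rintro ω ⟨-, h1⟩ ⟨-, h2⟩
        simp only [Set.mem_setOf_eq] at h1 h2
        rw [h1] at h2; exact Bool.false_ne_true h2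
      have hmeas2 : MeasurableSet (D ∩ {ω : Config | ω v = true}) := by
        have he2 : {ω : Config | ω v = true} = (fun ω : Config => ω v) ⁻¹' {true} := by
          ext ω; simp
        rw [he2]
        exact hD.inter ((measurable_pi_apply v) (measurableSet_singleton true))
      conv_lhs => rw [hDeq]
      exact measure_union hdisj2 hmeas2
    -- indicator identities
    have hind : ∀ b : Bool, (fun ω : Config => Set.indicator D (1 : Config → ℝ) (Function.update ω v b))
        = Set.indicator ((fun ω : Config => Function.update ω v b) ⁻¹' D) (1 : Config → ℝ) := by
      intro b
      funext ω
      rfl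
    have toReal_w : ∀ b : Bool, (w p b).toReal = if b then p else 1 - p := by
      intro b
      cases b <;> simp [w, ENNReal.toReal_ofReal, hp.1, sub_nonneg.2 hp.2]
    rw [hDsplit]
    rw [ENNReal.toReal_add (by rw [hmeas_b]; exact ENNReal.mul_ne_top ENNReal.ofReal_ne_top (measure_ne_top μ _))
      (by rw [hmeas_b]; exact ENNReal.mul_ne_top ENNReal.ofReal_ne_top (measure_ne_top μ _))]
    rw [hmeas_b false, hmeas_b true, ENNReal.toReal_mul, ENNReal.toReal_mul]
    rw [toReal_w false, toReal_w true]
    rw [ih Df hDfm (hdep_b false), ih Dt hDtm (hdep_b true)]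
    simp only [EL, hind]
    rw [hDf, hDt]
    norm_num

/-- finite FKG for decreasing events depending on finitely many coordinates -/
lemma finite_harris (hp : p ∈ Set.Icc (0:ℝ) 1) (hμ : IsBernoulliProduct p μ)
    {I : Type*} (s : Finset I) (Λ : Finset V) (D : I → Set Config)
    (hdep : ∀ i ∈ s, DepOn (D i) ↑Λ) (hdec : ∀ i ∈ s, DecreasingEvent (D i)) :
    ∏ i ∈ s, (μ (D i)).toReal ≤ (μ (⋂ i ∈ s, D i)).toReal := by
  classical
  have hmemL : {x : V | x ∈ Λ.toList} = ↑Λ := by ext x; simp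
  have hdepInter : DepOn (⋂ i ∈ s, D i) ↑Λ := by
    intro ω ω' hag
    simp only [Set.mem_iInter]
    exact forall₂_congr fun i hi => hdep i hi ω ω' hag
  have hbridge : ∀ i ∈ s, (μ (D i)).toReal = EL p Λ.toList (Set.indicator (D i) 1) := by
    intro i hi
    exact bridge hp hμ Λ.toList (D i) ((hdep i hi).measurableSet) (by rw [hmemL]; exact hdep i hi)
  have hbridge2 : (μ (⋂ i ∈ s, D i)).toReal = EL p Λ.toList (Set.indicator (⋂ i ∈ s, D i) 1) :=
    bridge hp hμ Λ.toList _ hdepInter.measurableSet (by rw [hmemL]; exact hdepInter)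
  rw [hbridge2, Finset.prod_congr rfl hbridge]
  have hindprod : (fun ω => ∏ i ∈ s, Set.indicator (D i) 1 ω)
      = Set.indicator (⋂ i ∈ s, D i) (1 : Config → ℝ) := by
    funext ω
    by_cases h : ω ∈ ⋂ i ∈ s, D i
    · rw [Set.indicator_of_mem h]
      simp only [Set.mem_iInter] at h
      rw [Finset.prod_congr rfl fun i hi => Set.indicator_of_mem (h i hi) 1]
      simp
    · rw [Set.indicator_of_notMem h]
      simp only [Set.mem_iInter, not_forall] at h
      obtain ⟨i, hi, hmem⟩ := h
      refine Finset.prod_eq_zero hi ?_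
      simp [Set.indicator_of_notMem hmem]
  have hAnti : ∀ i ∈ s, Anti (Set.indicator (D i) (1 : Config → ℝ)) := by
    intro i hi ω ω' hle
    by_cases h : ω' ∈ D i
    · simp [Set.indicator_of_mem h, Set.indicator_of_mem (hdec i hi ω' ω hle h)]
    · rw [Set.indicator_of_notMem h]
      exact Set.indicator_apply_nonneg fun _ => zero_le_one
  have hNN : ∀ i ∈ s, NN (Set.indicator (D i) (1 : Config → ℝ)) :=
    fun i _ ω => Set.indicator_apply_nonneg fun _ => zero_le_one
  calc ∏ i ∈ s, EL p Λ.toList (Set.indicator (D i) 1)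
      ≤ EL p Λ.toList (fun ω => ∏ i ∈ s, Set.indicator (D i) 1 ω) := EL_prod hp s _ hAnti hNN _
    _ = EL p Λ.toList (Set.indicator (⋂ i ∈ s, D i) 1) := by rw [hindprod]

end Bridge

section Approx

variable {p : ℝ} {μ : Measure Config}

lemma symmDiff_subset_union_of_subset {X Y D : Set Config} (h : Y ⊆ X) :
    X ∆ D ⊆ (X \ Y) ∪ (Y ∆ D) := by
  intro ω hω
  rw [Set.mem_symmDiff] at hω
  simp only [Set.mem_union, Set.mem_diff, Set.mem_symmDiff]
  rcases hω with ⟨hX, hD⟩ | ⟨hD, hX⟩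
  · by_cases hY : ω ∈ Y
    · exact Or.inr (Or.inl ⟨hY, hD⟩)
    · exact Or.inl ⟨hX, hY⟩
  · exact Or.inr (Or.inr ⟨hD, fun hY => hX (h hY)⟩)

lemma symmDiff_biUnion_subset (F : Finset ℕ) (g D : ℕ → Set Config) :
    ((⋃ i ∈ F, g i) ∆ (⋃ i ∈ F, D i)) ⊆ ⋃ i ∈ F, (g i ∆ D i) := by
  intro ω hω
  rw [Set.mem_symmDiff] at hω
  simp only [Set.mem_iUnion, exists_prop] at hω ⊢
  rcases hω with ⟨⟨i, hi, hg⟩, hD⟩ | ⟨⟨i, hi, hg⟩, hD⟩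
  · push_neg at hD
    exact ⟨i, hi, Set.mem_symmDiff.mpr (Or.inl ⟨hg, hD i hi⟩)⟩
  · push_neg at hD
    exact ⟨i, hi, Set.mem_symmDiff.mpr (Or.inr ⟨hg, hD i hi⟩)⟩

lemma depOn_biUnion {F : Finset ℕ} {Λ : ℕ → Finset V} {D : ℕ → Set Config}
    (h : ∀ i ∈ F, DepOn (D i) ↑(Λ i)) : DepOn (⋃ i ∈ F, D i) ↑(F.biUnion Λ) := by
  intro ω ω' hag
  simp only [Set.mem_iUnion, exists_prop]
  refine exists_congr fun i => ?_
  refine and_congr_right fun hi => ?_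
  refine h i hi ω ω' fun v hv => ?_
  refine hag v ?_
  simp only [Finset.coe_biUnion, Set.mem_iUnion, Finset.mem_coe]
  exact ⟨i, hi, hv⟩

lemma approx (hμ : IsBernoulliProduct p μ) :
    ∀ ⦃B : Set Config⦄, MeasurableSet B → ∀ ε : ℝ≥0∞, 0 < ε →
      ∃ Λ : Finset V, ∃ D : Set Config, DepOn D ↑Λ ∧ μ (B ∆ D) ≤ ε := by
  haveI : IsProbabilityMeasure μ := hμ.1
  have h_eq : (MeasurableSpace.pi : MeasurableSpace Config) = generateFrom (atoms V) :=
    pi_eq_generateFrom_atoms V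
  refine MeasurableSpace.induction_on_inter h_eq (isPiSystem_atoms V) ?_ ?_ ?_ ?_
  · intro ε hε
    exact ⟨∅, ∅, fun ω ω' _ => Iff.rfl, by simp⟩
  · rintro B ⟨t, g, rfl⟩ ε hε
    refine ⟨t, {x | ∀ i ∈ t, x i = g i}, ?_, by simp⟩
    intro ω ω' hag
    exact forall₂_congr fun v hv => by rw [hag v (Finset.mem_coe.mpr hv)]
  · rintro B hBm hB ε hε
    obtain ⟨Λ, D, hdep, hle⟩ := hB ε hε
    refine ⟨Λ, Dᶜ, fun ω ω' hag => not_congr (hdep ω ω' hag), ?_⟩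
    rwa [compl_symmDiff_compl]
  · rintro g hdisj hm hR ε hε
    rcases le_or_gt (μ (⋃ i, g i)) ε with hle | hlt
    · refine ⟨∅, ∅, fun ω ω' _ => Iff.rfl, ?_⟩
      have : (⋃ i, g i) ∆ (∅ : Set Config) = ⋃ i, g i := by
        rw [Set.symmDiff_def]; simp
      rwa [this]
    · set S := μ (⋃ i, g i) with hSdef
      have hS : S = ∑' i, μ (g i) := measure_iUnion hdisj hm
      have hS0 : S ≠ 0 := (lt_of_le_of_lt (zero_le (a := ε)) hlt).ne'
      have hSfin : S ≠ ⊤ := measure_ne_top μ _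
      have hhalf : (ε / 2) ≠ 0 := (ENNReal.half_pos hε.ne').ne'
      have hsub : S - ε / 2 < S := ENNReal.sub_lt_self hSfin hS0 hhalf
      have hiSup : S = ⨆ n, ∑ i ∈ Finset.range n, μ (g i) := by
        rw [hS, ENNReal.tsum_eq_iSup_sum]
        apply le_antisymm
        · exact iSup_le fun F => le_iSup_of_le (F.sup id + 1)
            (Finset.sum_le_sum_of_subset fun i hi => Finset.mem_range.mpr
              (Nat.lt_succ_of_le (Finset.le_sup (f := id) hi)))
        · exact iSup_le fun n => le_iSup_of_le (Finset.range n) le_rfl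
      obtain ⟨N, hN⟩ := lt_iSup_iff.mp (hiSup ▸ hsub)
      have Hpos : (0:ℝ≥0∞) < ε / 2 / N := by
        refine ENNReal.div_pos hhalf (by simp)
      choose ΛD DD hdep2 hle2 using fun i : ℕ => hR i (ε / 2 / N) Hpos
      refine ⟨(Finset.range N).biUnion ΛD, ⋃ i ∈ Finset.range N, DD i,
        depOn_biUnion fun i _ => hdep2 i, ?_⟩
      have hsubset : ((⋃ i, g i) ∆ (⋃ i ∈ Finset.range N, DD i))
          ⊆ ((⋃ i, g i) \ (⋃ i ∈ Finset.range N, g i))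
            ∪ ((⋃ i ∈ Finset.range N, g i) ∆ (⋃ i ∈ Finset.range N, DD i)) :=
        symmDiff_subset_union_of_subset (Set.iUnion₂_subset fun i _ => Set.subset_iUnion g i)
      refine le_trans (measure_mono hsubset) ?_
      refine le_trans (measure_union_le _ _) ?_
      have hterm1 : μ ((⋃ i, g i) \ (⋃ i ∈ Finset.range N, g i)) ≤ ε / 2 := by
        have hmp : MeasurableSet (⋃ i ∈ Finset.range N, g i) :=
          MeasurableSet.biUnion (Finset.range N).countable_toSet fun i _ => hm i
        rw [measure_diff (Set.iUnion₂_subset fun i _ => Set.subset_iUnion g i)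
          hmp.nullMeasurableSet (measure_ne_top μ _)]
        have hmeq : μ (⋃ i ∈ Finset.range N, g i) = ∑ i ∈ Finset.range N, μ (g i) := by
          rw [measure_biUnion_finset (fun i _ j _ hij => hdisj hij) (fun i _ => hm i)]
        rw [hmeq, ← hSdef]
        rw [tsub_le_iff_right]
        calc S = ⨆ n, ∑ i ∈ Finset.range n, μ (g i) := hiSup
          _ ≤ ∑ i ∈ Finset.range N, μ (g i) + ε / 2 := by
              rw [← tsub_le_iff_right]; exact hN.le
          _ = ε / 2 + ∑ i ∈ Finset.range N, μ (g i) := add_comm _ _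
      have hterm2 : μ ((⋃ i ∈ Finset.range N, g i) ∆ (⋃ i ∈ Finset.range N, DD i)) ≤ ε / 2 := by
        refine le_trans (measure_mono (symmDiff_biUnion_subset _ _ _)) ?_
        refine le_trans (measure_biUnion_finset_le _ _) ?_
        refine le_trans (Finset.sum_le_sum fun i _ => hle2 i) ?_
        rw [Finset.sum_const, Finset.card_range, nsmul_eq_mul]
        exact ENNReal.mul_div_le
      calc μ ((⋃ i, g i) \ (⋃ i ∈ Finset.range N, g i))
            + μ ((⋃ i ∈ Finset.range N, g i) ∆ (⋃ i ∈ Finset.range N, DD i))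
          ≤ ε / 2 + ε / 2 := add_le_add hterm1 hterm2
        _ = ε := ENNReal.add_halves ε

end Approx

section Dec

variable {p : ℝ} {μ : Measure Config}

def patch (Λ : Finset V) (ω : Config) : Config → Config :=
  fun ω' v => if v ∈ Λ then ω v else ω' v

lemma measurable_patch (Λ : Finset V) (ω : Config) : Measurable (patch Λ ω) := by
  refine measurable_pi_lambda _ fun v => ?_
  by_cases h : v ∈ Λ
  · simp only [patch, if_pos h]; exact measurable_const
  · simp only [patch, if_neg h]; exact measurable_pi_apply v

lemma patch_eq_self {Λ : Finset V} {η : {v : V // v ∈ Λ} → Bool} {ω : Config}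
    (hω : ω ∈ atomEv Λ (extΛ Λ η)) : patch Λ (extΛ Λ η) ω = ω := by
  funext v
  simp only [patch]
  split
  · exact (hω v ‹_›).symm
  · rfl

lemma mem_own_atom (Λ : Finset V) (ω : Config) :
    ω ∈ atomEv Λ (extΛ Λ (fun i => ω i.1)) := by
  intro v hv
  simp [extΛ, hv]

lemma atom_decomp (Λ : Finset V) {X : Set Config} (hX : MeasurableSet X) :
    μ X = ∑ η : {v : V // v ∈ Λ} → Bool, μ (atomEv Λ (extΛ Λ η) ∩ X) := by
  classical
  have hcover : X = ⋃ η ∈ (Finset.univ : Finset ({v : V // v ∈ Λ} → Bool)),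
      (atomEv Λ (extΛ Λ η) ∩ X) := by
    ext ω
    simp only [Set.mem_iUnion, Finset.mem_univ, exists_prop, true_and, Set.mem_inter_iff]
    exact ⟨fun h => ⟨fun i => ω i.1, mem_own_atom Λ ω, h⟩, fun ⟨η, _, h⟩ => h⟩
  conv_lhs => rw [hcover]
  rw [measure_biUnion_finset ?_ (fun η _ => (measurableSet_atomEv _ _).inter hX)]
  · rintro η - η' - hne
    rw [Function.onFun, Set.disjoint_left]
    rintro ω ⟨h1, -⟩ ⟨h2, -⟩
    refine hne (funext fun i => ?_)
    have e1 := h1 i.1 i.2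
    have e2 := h2 i.1 i.2
    rw [e2] at e1
    exact (by simpa [extΛ, i.2] using e1 : η' i = η i).symm

lemma key_patch (hp : p ∈ Set.Icc (0:ℝ) 1) (hμ : IsBernoulliProduct p μ)
    (Λ : Finset V) (η : {v : V // v ∈ Λ} → Bool) {X : Set Config} (hX : MeasurableSet X) :
    μ (atomEv Λ (extΛ Λ η) ∩ X)
      = (∏ v ∈ Λ, w p (extΛ Λ η v)) * μ ((patch Λ (extΛ Λ η)) ⁻¹' X) := by
  have hsame : atomEv Λ (extΛ Λ η) ∩ X = atomEv Λ (extΛ Λ η) ∩ ((patch Λ (extΛ Λ η)) ⁻¹' X) := by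
    ext ω
    simp only [Set.mem_inter_iff, Set.mem_preimage]
    constructor
    · rintro ⟨h1, h2⟩; exact ⟨h1, by rwa [patch_eq_self h1]⟩
    · rintro ⟨h1, h2⟩; exact ⟨h1, by rwa [patch_eq_self h1] at h2⟩
  rw [hsame]
  refine key_indep hp hμ Λ _ _ (hX.preimage (measurable_patch _ _)) ?_
  intro ω ω' hag
  have : patch Λ (extΛ Λ η) ω = patch Λ (extΛ Λ η) ω' := by
    funext v
    simp only [patch]
    split
    · rfl
    · exact hag v (by simpa using ‹¬ v ∈ Λ›)
  simp only [Set.mem_preimage, this]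

lemma approx_dec (hp : p ∈ Set.Icc (0:ℝ) 1) (hμ : IsBernoulliProduct p μ)
    {B : Set Config} (hB : MeasurableSet B) (hBdec : DecreasingEvent B)
    {ε : ℝ≥0∞} (hε : 0 < ε) :
    ∃ Λ : Finset V, ∃ D : Set Config, DepOn D ↑Λ ∧ DecreasingEvent D ∧ μ (B ∆ D) ≤ ε := by
  classical
  haveI : IsProbabilityMeasure μ := hμ.1
  obtain ⟨Λ, D, hdep, hle⟩ := approx hμ hB ε hε
  set gval : Config → ℝ≥0∞ := fun ω => μ ((patch Λ ω) ⁻¹' B) with hgval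
  set D' : Set Config := {ω | 1 ≤ 2 * gval ω} with hD'
  have hpatch_agree : ∀ ω ω' : Config, (∀ v ∈ (↑Λ : Set V), ω v = ω' v) →
      patch Λ ω = patch Λ ω' := by
    intro ω ω' hag
    funext ω'' v
    simp only [patch]
    split
    · exact hag v (Finset.mem_coe.mpr ‹_›)
    · rfl
  have hdep' : DepOn D' ↑Λ := by
    intro ω ω' hag
    simp only [hD', Set.mem_setOf_eq, hgval, hpatch_agree ω ω' hag]
  have hdec' : DecreasingEvent D' := by
    intro ω ω' hle' hω
    have hmono : (patch Λ ω) ⁻¹' B ⊆ (patch Λ ω') ⁻¹' B := by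
      intro ω'' hω''
      refine hBdec _ _ ?_ hω''
      intro v
      simp only [patch]
      split
      · exact hle' v
      · exact le_refl _
    exact le_trans hω (mul_le_mul_right (measure_mono hmono) 2)
  refine ⟨Λ, D', hdep', hdec', le_trans ?_ hle⟩
  have hD'm : MeasurableSet D' := hdep'.measurableSet
  have hDm : MeasurableSet D := hdep.measurableSet
  rw [atom_decomp Λ (hB.symmDiff hD'm), atom_decomp Λ (hB.symmDiff hDm)]
  refine Finset.sum_le_sum fun η _ => ?_
  -- abbreviations
  set ηc : Config := extΛ Λ η with hηc
  have hsplit : ∀ E : Set Config, DepOn E ↑Λ →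
      atomEv Λ ηc ∩ (B ∆ E) = if ηc ∈ E then atomEv Λ ηc ∩ Bᶜ else atomEv Λ ηc ∩ B := by
    intro E hdepE
    have hmem : ∀ ω ∈ atomEv Λ ηc, (ω ∈ E ↔ ηc ∈ E) := by
      intro ω hω
      exact hdepE ω ηc fun v hv => hω v (Finset.mem_coe.mp hv)
    ext ω
    by_cases hη : ηc ∈ E
    · simp only [if_pos hη, Set.mem_inter_iff, Set.mem_compl_iff, Set.mem_symmDiff]
      constructor
      · rintro ⟨h1, h2⟩
        refine ⟨h1, ?_⟩
        rcases h2 with ⟨hb, he⟩ | ⟨he, hb⟩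
        · exact absurd ((hmem ω h1).mpr hη) he
        · exact hb
      · rintro ⟨h1, h2⟩
        exact ⟨h1, Or.inr ⟨(hmem ω h1).mpr hη, h2⟩⟩
    · simp only [if_neg hη, Set.mem_inter_iff, Set.mem_symmDiff]
      constructor
      · rintro ⟨h1, h2⟩
        refine ⟨h1, ?_⟩
        rcases h2 with ⟨hb, he⟩ | ⟨he, hb⟩
        · exact hb
        · exact absurd ((hmem ω h1).mp he) hη
      · rintro ⟨h1, h2⟩
        exact ⟨h1, Or.inl ⟨h2, fun he => hη ((hmem ω h1).mp he)⟩⟩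
  have hvalB : μ (atomEv Λ ηc ∩ B) = (∏ v ∈ Λ, w p (ηc v)) * gval ηc :=
    key_patch hp hμ Λ η hB
  have hvalBc : μ (atomEv Λ ηc ∩ Bᶜ) = (∏ v ∈ Λ, w p (ηc v)) * (1 - gval ηc) := by
    rw [key_patch hp hμ Λ η hB.compl]
    congr 1
    have : (patch Λ ηc) ⁻¹' Bᶜ = ((patch Λ ηc) ⁻¹' B)ᶜ := rfl
    rw [this, measure_compl (hB.preimage (measurable_patch _ _)) (measure_ne_top μ _),
      measure_univ]
  have hg1 : gval ηc ≤ 1 := prob_le_one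
  rw [hsplit D' hdep', hsplit D hdep]
  by_cases h1 : ηc ∈ D' <;> by_cases h2 : ηc ∈ D
  · rw [if_pos h1, if_pos h2]
  · -- in D' but not D : show μ(atom ∩ Bᶜ) ≤ μ(atom ∩ B)
    rw [if_pos h1, if_neg h2, hvalBc, hvalB]
    refine mul_le_mul_right ?_ _
    rw [tsub_le_iff_right, ← two_mul]
    exact h1
  · -- not in D' but in D : show μ(atom ∩ B) ≤ μ(atom ∩ Bᶜ)
    rw [if_neg h1, if_pos h2, hvalBc, hvalB]
    refine mul_le_mul_right ?_ _
    have h1' : ¬ (1:ℝ≥0∞) ≤ 2 * gval ηc := h1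
    rw [(ENNReal.cancel_of_ne (by
        exact ne_top_of_le_ne_top ENNReal.one_ne_top hg1)).le_tsub_iff_right hg1, ← two_mul]
    exact le_of_not_gt fun hcon => h1' hcon.le
  · rw [if_neg h1, if_neg h2]

end Dec

section Assemble

variable {p : ℝ} {μ : Measure Config}

lemma prod_le_prod_add {I : Type*} (s : Finset I) (x y : I → ℝ)
    (hx : ∀ i ∈ s, x i ∈ Set.Icc (0:ℝ) 1) (hy : ∀ i ∈ s, y i ∈ Set.Icc (0:ℝ) 1) :
    ∏ i ∈ s, x i ≤ ∏ i ∈ s, y i + ∑ i ∈ s, |x i - y i| := by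
  classical
  induction s using Finset.induction with
  | empty => simp
  | @insert a s hmem ih =>
    have hx' := fun i hi => hx i (Finset.mem_insert_of_mem hi)
    have hy' := fun i hi => hy i (Finset.mem_insert_of_mem hi)
    have hxa := hx a (Finset.mem_insert_self a s)
    have hya := hy a (Finset.mem_insert_self a s)
    have ihs := ih hx' hy'
    rw [Finset.prod_insert hmem, Finset.prod_insert hmem, Finset.sum_insert hmem]
    set P := ∏ i ∈ s, x i with hP
    set Q := ∏ i ∈ s, y i with hQ
    set SS := ∑ i ∈ s, |x i - y i| with hSS
    have hP0 : 0 ≤ P := Finset.prod_nonneg fun i hi => (hx' i hi).1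
    have hQ0 : 0 ≤ Q := Finset.prod_nonneg fun i hi => (hy' i hi).1
    have hQ1 : Q ≤ 1 := Finset.prod_le_one (fun i hi => (hy' i hi).1) (fun i hi => (hy' i hi).2)
    have hSS0 : 0 ≤ SS := Finset.sum_nonneg fun i _ => abs_nonneg _
    have e1 : x a * P ≤ x a * (Q + SS) := mul_le_mul_of_nonneg_left ihs hxa.1
    have e1' : x a * (Q + SS) = x a * Q + x a * SS := by ring
    have e2 : x a * SS ≤ SS := mul_le_of_le_one_left hSS0 hxa.2
    have e3 : (x a - y a) * Q ≤ |x a - y a| := by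
      calc (x a - y a) * Q ≤ |x a - y a| * Q := mul_le_mul_of_nonneg_right (le_abs_self _) hQ0
        _ ≤ |x a - y a| * 1 := mul_le_mul_of_nonneg_left hQ1 (abs_nonneg _)
        _ = |x a - y a| := mul_one _
    have e4 : x a * Q = y a * Q + (x a - y a) * Q := by ring
    linarith

lemma toReal_abs_diff_le (hμ : IsBernoulliProduct p μ) {A D : Set Config}
    (hA : MeasurableSet A) (hD : MeasurableSet D) :
    |(μ A).toReal - (μ D).toReal| ≤ (μ (A ∆ D)).toReal := by
  haveI : IsProbabilityMeasure μ := hμ.1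
  have hsub : ∀ X Y : Set Config, X ⊆ Y ∪ (X ∆ Y) := by
    intro X Y ω hω
    by_cases h : ω ∈ Y
    · exact Or.inl h
    · exact Or.inr (Set.mem_symmDiff.mpr (Or.inl ⟨hω, h⟩))
  have h1 : μ A ≤ μ D + μ (A ∆ D) :=
    le_trans (measure_mono (hsub A D)) (measure_union_le _ _)
  have h2 : μ D ≤ μ A + μ (A ∆ D) := by
    refine le_trans (measure_mono (hsub D A)) (le_trans (measure_union_le _ _) ?_)
    rw [symmDiff_comm]
  rw [abs_le]
  constructor
  · have := ENNReal.toReal_mono (by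
      exact ENNReal.add_ne_top.mpr ⟨measure_ne_top μ _, measure_ne_top μ _⟩) h2
    rw [ENNReal.toReal_add (measure_ne_top μ _) (measure_ne_top μ _)] at this
    linarith
  · have := ENNReal.toReal_mono (by
      exact ENNReal.add_ne_top.mpr ⟨measure_ne_top μ _, measure_ne_top μ _⟩) h1
    rw [ENNReal.toReal_add (measure_ne_top μ _) (measure_ne_top μ _)] at this
    linarith

lemma inter_bound (hμ : IsBernoulliProduct p μ) {I : Type*} (s : Finset I)
    (A D : I → Set Config) (hA : ∀ i ∈ s, MeasurableSet (A i))
    (hD : ∀ i ∈ s, MeasurableSet (D i)) :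
    (μ (⋂ i ∈ s, D i)).toReal
      ≤ (μ (⋂ i ∈ s, A i)).toReal + ∑ i ∈ s, (μ (A i ∆ D i)).toReal := by
  haveI : IsProbabilityMeasure μ := hμ.1
  have hsub : (⋂ i ∈ s, D i) ⊆ (⋂ i ∈ s, A i) ∪ ⋃ i ∈ s, (A i ∆ D i) := by
    intro ω hω
    simp only [Set.mem_iInter] at hω
    by_cases h : ∀ i ∈ s, ω ∈ A i
    · exact Or.inl (Set.mem_iInter₂.mpr h)
    · push_neg at h
      obtain ⟨i, hi, hAi⟩ := h
      refine Or.inr (Set.mem_iUnion₂.mpr ⟨i, hi, ?_⟩)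
      exact Set.mem_symmDiff.mpr (Or.inr ⟨hω i hi, hAi⟩)
  have hEN : μ (⋂ i ∈ s, D i) ≤ μ (⋂ i ∈ s, A i) + ∑ i ∈ s, μ (A i ∆ D i) := by
    refine le_trans (measure_mono hsub) (le_trans (measure_union_le _ _) ?_)
    exact add_le_add_right (measure_biUnion_finset_le s _) _
  have hfin : μ (⋂ i ∈ s, A i) + ∑ i ∈ s, μ (A i ∆ D i) ≠ ⊤ :=
    ENNReal.add_ne_top.mpr ⟨measure_ne_top μ _,
      (ENNReal.sum_lt_top.mpr fun i _ => measure_lt_top μ _).ne⟩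
  have := ENNReal.toReal_mono hfin hEN
  rwa [ENNReal.toReal_add (measure_ne_top μ _)
      ((ENNReal.sum_lt_top.mpr fun i _ => measure_lt_top μ _).ne),
    ENNReal.toReal_sum (fun i _ => measure_ne_top μ _)] at this

lemma main_real (hp : p ∈ Set.Icc (0:ℝ) 1) (hμ : IsBernoulliProduct p μ)
    {I : Type*} (s : Finset I) (A : I → Set Config) (hmeas : ∀ i ∈ s, MeasurableSet (A i))
    (hdec : ∀ i ∈ s, DecreasingEvent (A i)) :
    ∏ i ∈ s, (μ (A i)).toReal ≤ (μ (⋂ i ∈ s, A i)).toReal := by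
  classical
  haveI : IsProbabilityMeasure μ := hμ.1
  have hIcc : ∀ X : Set Config, (μ X).toReal ∈ Set.Icc (0:ℝ) 1 := by
    intro X
    refine ⟨ENNReal.toReal_nonneg, ?_⟩
    have := ENNReal.toReal_mono ENNReal.one_ne_top (prob_le_one (μ := μ) (s := X))
    simpa using this
  refine le_of_forall_pos_le_add ?_
  intro ε hε
  set δ : ℝ := ε / (2 * s.card + 1) with hδdef
  have hδ : 0 < δ := by positivity
  -- choose decreasing finitely-supported approximations
  have H : ∀ i : I, ∃ ΛD : Finset V × Set Config, i ∈ s →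
      DepOn ΛD.2 ↑ΛD.1 ∧ DecreasingEvent ΛD.2 ∧ μ (A i ∆ ΛD.2) ≤ ENNReal.ofReal δ := by
    intro i
    by_cases hi : i ∈ s
    · obtain ⟨Λi, Di, h1, h2, h3⟩ := approx_dec hp hμ (hmeas i hi) (hdec i hi)
        (ENNReal.ofReal_pos.mpr hδ)
      exact ⟨(Λi, Di), fun _ => ⟨h1, h2, h3⟩⟩
    · exact ⟨(∅, ∅), fun h => absurd h hi⟩
  choose ΛD hΛD using H
  set Λtot : Finset V := s.biUnion (fun i => (ΛD i).1) with hΛtot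
  set D : I → Set Config := fun i => (ΛD i).2 with hDdef
  have hdepi : ∀ i ∈ s, DepOn (D i) ↑Λtot := fun i hi =>
    ((hΛD i hi).1).mono (Finset.coe_subset.mpr (Finset.subset_biUnion_of_mem (fun j => (ΛD j).1) hi))
  have hdeci : ∀ i ∈ s, DecreasingEvent (D i) := fun i hi => (hΛD i hi).2.1
  have hclose : ∀ i ∈ s, (μ (A i ∆ D i)).toReal ≤ δ := by
    intro i hi
    have := ENNReal.toReal_mono ENNReal.ofReal_ne_top (hΛD i hi).2.2
    rwa [ENNReal.toReal_ofReal hδ.le] at this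
  have hDm : ∀ i ∈ s, MeasurableSet (D i) := fun i hi => (hdepi i hi).measurableSet
  have habs : ∀ i ∈ s, |(μ (A i)).toReal - (μ (D i)).toReal| ≤ δ := fun i hi =>
    le_trans (toReal_abs_diff_le hμ (hmeas i hi) (hDm i hi)) (hclose i hi)
  have hsum_abs : ∑ i ∈ s, |(μ (A i)).toReal - (μ (D i)).toReal| ≤ s.card * δ := by
    refine le_trans (Finset.sum_le_card_nsmul s _ δ habs) ?_
    rw [nsmul_eq_mul]
  have hsum2 : ∑ i ∈ s, (μ (A i ∆ D i)).toReal ≤ s.card * δ := by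
    refine le_trans (Finset.sum_le_card_nsmul s _ δ hclose) ?_
    rw [nsmul_eq_mul]
  have step1 : ∏ i ∈ s, (μ (A i)).toReal
      ≤ ∏ i ∈ s, (μ (D i)).toReal + ∑ i ∈ s, |(μ (A i)).toReal - (μ (D i)).toReal| :=
    prod_le_prod_add s _ _ (fun i _ => hIcc _) (fun i _ => hIcc _)
  have step2 : ∏ i ∈ s, (μ (D i)).toReal ≤ (μ (⋂ i ∈ s, D i)).toReal :=
    finite_harris hp hμ s Λtot D hdepi hdeci
  have step3 := inter_bound hμ s A D hmeas hDm
  have hcard : (s.card : ℝ) * δ + (s.card : ℝ) * δ ≤ ε := by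
    have hne : (2 * (s.card : ℝ) + 1) ≠ 0 := by positivity
    have : δ * (2 * s.card + 1) = ε := by
      rw [hδdef]; field_simp
    nlinarith [hδ]
  linarith

end Assemble

end FKGaux

/-- Consider the product Bernoulli(`p`) measure `P_p` on configurations
`ω : ℤ × ℤ → Bool`. If `(A_i)_{i ∈ I}` is a finite family of measurable decreasing events,
then `P_p(⋂_{i ∈ I} A_i) ≥ ∏_{i ∈ I} P_p(A_i)`. -/
theorem fkg_finite_family {I : Type*} (s : Finset I)
    (p : ℝ) (hp : p ∈ Set.Icc (0 : ℝ) 1)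
    (μ : Measure Config) (hμ : IsBernoulliProduct p μ)
    (A : I → Set Config) (hmeas : ∀ i ∈ s, MeasurableSet (A i))
    (hdec : ∀ i ∈ s, DecreasingEvent (A i)) :
    ∏ i ∈ s, μ (A i) ≤ μ (⋂ i ∈ s, A i) := by
  haveI : IsProbabilityMeasure μ := hμ.1
  have hfin1 : ∏ i ∈ s, μ (A i) ≠ ⊤ :=
    ENNReal.prod_ne_top fun i _ => measure_ne_top μ _
  rw [← ENNReal.toReal_le_toReal hfin1 (measure_ne_top μ _), ENNReal.toReal_prod]
  exact FKGaux.main_real hp hμ s A hmeas hdec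
end
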